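/- arXiv:2409.17838 — 3 statements merged into one kernel-verified Lean document; each statement's English description precedes it below -/
import Mathlib

section
/- Let 𝔞 be a nonempty finite set and assume the boundedness condition with constants M_θ > 0, ρ > 0, M_φ ≥ 0. Set Q = 2·M_θ·max{(1+ρ·M_φ)², 1+4·ρ·M_φ} and u = 3^{−4/3}·ρ. Then for all α = (a,i), β = (b,j), γ = (c,k) in 𝔄 = 𝔞×ℤ_{≥0} one has |A_{α,β,γ}| ≤ Q·A^PI_{i,j,k}(u), |B_{α,β}^{γ}| ≤ Q·B^PI_{i,j}^{k}(u), |C_{α}^{β,γ}| ≤ Q·C^PI_{i}^{j,k}(u), and |D_{α}| ≤ Q·D^PI_{i}(u). -/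
open scoped BigOperators

noncomputable section

/-- The data of a quantum Airy structure: tensors `A`, `B`, `C`, `D`.
`B α β γ` stands for `B_{α,β}^{γ}` and `C α β γ` for `C_{α}^{β,γ}`. -/
structure AiryTensors (𝕜 : Type*) [RCLike 𝕜] (ι : Type*) where
  A : ι → ι → ι → 𝕜
  B : ι → ι → ι → 𝕜
  C : ι → ι → ι → 𝕜
  D : ι → 𝕜

/-- The sublist of `l` formed by the entries whose index lies in `s`. -/
def selectIdx {ι : Type*} (l : List ι) (s : Finset (Fin l.length)) : List ι :=
  ((List.finRange l.length).filter (fun i => decide (i ∈ s))).map l.get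

/-- `F` is the family of amplitudes associated with the tensors `T`:
symmetric in its indices, vanishing when `k₁ + ⋯ + kₙ > 3g - 3 + n` (where `k = deg`),
with initial data `F_{0;α,β,γ} = A_{α,β,γ}`, `F_{1;α} = D_α`, the conventions
`F_{0;α} = F_{0;α,β} = 0`, and satisfying the topological recursion on `2g - 2 + n`. -/
structure IsAmplitudes {𝕜 : Type*} [RCLike 𝕜] {ι : Type*} (deg : ι → ℕ)
    (T : AiryTensors 𝕜 ι) (F : ℕ → List ι → 𝕜) : Prop where
  symm : ∀ g (l l' : List ι), l.Perm l' → F g l = F g l'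
  vanish : ∀ g (l : List ι), 1 ≤ l.length → 2 < 2 * g + l.length →
    3 * g + l.length < (l.map deg).sum + 3 → F g l = 0
  zero_one : ∀ α, F 0 [α] = 0
  zero_two : ∀ α β, F 0 [α, β] = 0
  base_A : ∀ α β γ, F 0 [α, β, γ] = T.A α β γ
  base_D : ∀ α, F 1 [α] = T.D α
  recur : ∀ g (α : ι) (l : List ι), 4 ≤ 2 * g + (l.length + 1) →
    F g (α :: l) =
      (∑ m : Fin l.length, ∑' μ : ι, T.B α (l.get m) μ * F g (μ :: l.eraseIdx m.1))
      + (1/2) * ∑' μ : ι, ∑' ν : ι, T.C α μ ν *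
          ((if g = 0 then 0 else F (g-1) (μ :: ν :: l))
           + ∑ g₁ ∈ Finset.range (g+1), ∑ s : Finset (Fin l.length),
               F g₁ (μ :: selectIdx l s) * F (g - g₁) (ν :: selectIdx l sᶜ))

/-- The Painlevé I quantum Airy structure with parameter `u`. -/
def PITensors (u : ℝ) : AiryTensors ℝ ℕ where
  A i j k := if i = 0 ∧ j = 0 ∧ k = 0 then 1 / (6 * u) else 0
  B i j k := if i + j ≤ k + 1 then
      (Nat.doubleFactorial (2*k+1) : ℝ) / (2 * (3*u) ^ (k + 2 - (i + j)) * (Nat.doubleFactorial (2*i+1) : ℝ) * (Nat.doubleFactorial (2*j-1) : ℝ))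
    else 0
  C i j k := if i ≤ j + k + 2 then
      ((Nat.doubleFactorial (2*j+1) : ℝ) * (Nat.doubleFactorial (2*k+1) : ℝ)) / (2 * (3*u) ^ (j + k + 3 - i) * (Nat.doubleFactorial (2*i+1) : ℝ))
    else 0
  D i := (if i = 0 then 1 / (16 * (3*u)^2) else 0) + (if i = 1 then 1 / (48 * (3*u)) else 0)

/-- The Airy quantum Airy structure. -/
def AiryT : AiryTensors ℝ ℕ where
  A i j k := if i = 0 ∧ j = 0 ∧ k = 0 then 1 else 0
  B i j k := if i + j = k + 1 then (Nat.doubleFactorial (2*k+1) : ℝ) / ((Nat.doubleFactorial (2*i+1) : ℝ) * (Nat.doubleFactorial (2*j-1) : ℝ)) else 0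
  C i j k := if i = j + k + 2 then ((Nat.doubleFactorial (2*j+1) : ℝ) * (Nat.doubleFactorial (2*k+1) : ℝ)) / (Nat.doubleFactorial (2*i+1) : ℝ) else 0
  D i := if i = 1 then 1 / 24 else 0

/-- The quantum Airy structure of a (local) spectral curve with ramification points `𝔞`,
built from the expansion coefficients `θ` (with `θ a m = 0` for `m < 0`) and `φ`. -/
def genTensors {𝕜 : Type*} [RCLike 𝕜] {𝔞 : Type*} [DecidableEq 𝔞]
    (θ : 𝔞 → ℤ → 𝕜) (φ : 𝔞 × ℕ → 𝔞 × ℕ → 𝕜) : AiryTensors 𝕜 (𝔞 × ℕ) where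
  A α β γ := if α.1 = β.1 ∧ β.1 = γ.1 ∧ α.2 = 0 ∧ β.2 = 0 ∧ γ.2 = 0 then θ α.1 0 else 0
  B α β γ :=
    (if α.1 = β.1 ∧ β.1 = γ.1 then
        θ α.1 ((γ.2 : ℤ) - α.2 - β.2 + 1) * (Nat.doubleFactorial (2*γ.2+1) : 𝕜)
          / ((Nat.doubleFactorial (2*α.2+1) : 𝕜) * (Nat.doubleFactorial (2*β.2-1) : 𝕜))
      else 0)
    + (if α.1 = β.1 ∧ α.2 = 0 ∧ β.2 = 0 then
        θ α.1 0 * φ (α.1, 0) γ * (Nat.doubleFactorial (2*γ.2-1) : 𝕜) else 0)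
  C α β γ :=
    (if α.1 = β.1 ∧ β.1 = γ.1 then
        θ α.1 ((β.2 : ℤ) + γ.2 - α.2 + 2) * ((Nat.doubleFactorial (2*β.2+1) : 𝕜) * (Nat.doubleFactorial (2*γ.2+1) : 𝕜))
          / (Nat.doubleFactorial (2*α.2+1) : 𝕜)
      else 0)
    + (if α.1 = β.1 then
        (∑ m ∈ Finset.range (β.2 + 2 - α.2), θ α.1 (m : ℤ) * φ (α.1, β.2 + 1 - α.2 - m) γ)
          * ((Nat.doubleFactorial (2*β.2+1) : 𝕜) * (Nat.doubleFactorial (2*γ.2-1) : 𝕜)) / (Nat.doubleFactorial (2*α.2+1) : 𝕜)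
      else 0)
    + (if α.1 = γ.1 then
        (∑ m ∈ Finset.range (γ.2 + 2 - α.2), θ α.1 (m : ℤ) * φ (α.1, γ.2 + 1 - α.2 - m) β)
          * ((Nat.doubleFactorial (2*β.2-1) : 𝕜) * (Nat.doubleFactorial (2*γ.2+1) : 𝕜)) / (Nat.doubleFactorial (2*α.2+1) : 𝕜)
      else 0)
    + (if α.2 = 0 then
        θ α.1 0 * φ (α.1, 0) β * φ (α.1, 0) γ * ((Nat.doubleFactorial (2*β.2-1) : 𝕜) * (Nat.doubleFactorial (2*γ.2-1) : 𝕜))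
      else 0)
  D α :=
    (if α.2 = 0 then θ α.1 0 * φ (α.1, 0) (α.1, 0) / 2 + θ α.1 1 / 8 else 0)
    + (if α.2 = 1 then θ α.1 0 / 24 else 0)

/-- The function `P` from the upper bound on Painlevé I amplitudes. -/
def Pfun (u : ℝ) : ℝ := if u < 2/5 then 2 / (5 * u^2) else 5 / (10 * u - 2)

private lemma key43 : ∀ N : ℕ, ((N : ℝ) + 3) ≤ (4/3) ^ (N + 4) := by
  intro N
  induction N with
  | zero => norm_num
  | succ n ih =>
    have h : ((4:ℝ)/3) ^ (n + 1 + 4) = (4/3) * (4/3)^(n+4) := by ring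
    push_cast
    rw [h]
    push_cast at ih
    nlinarith [ih]

private lemma nat_le_pow43 : ∀ N : ℕ, (N : ℝ) ≤ (4/3) ^ (N + 1) := by
  intro N
  match N with
  | 0 => norm_num
  | 1 => norm_num
  | 2 => norm_num
  | (m+3) =>
    have h := key43 m
    push_cast
    calc ((m:ℝ)+3) ≤ (4/3)^(m+4) := h
    _ = (4/3)^(m+3+1) := by ring_nf

private lemma nat_le_tpow {t : ℝ} (ht : 4/3 ≤ t) (N : ℕ) : (N : ℝ) ≤ t ^ (N + 1) :=
  (nat_le_pow43 N).trans (pow_le_pow_left₀ (by norm_num) ht _)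

private lemma df_odd (k : ℕ) : Nat.doubleFactorial (2*k+1) = (2*k+1) * Nat.doubleFactorial (2*k-1) := by
  match k with
  | 0 => rfl
  | (m+1) =>
    have h2 : 2*(m+1)+1 = (2*m+1) + 2 := by ring
    rw [h2, Nat.doubleFactorial]
    congr 1 <;> omega

private lemma norm_ite_le {P : Prop} [Decidable P] (x : ℂ) (r : ℝ) (hr : 0 ≤ r)
    (h : P → ‖x‖ ≤ r) : ‖if P then x else 0‖ ≤ r := by
  split_ifs with hp
  · exact h hp
  · simpa using hr

set_option maxHeartbeats 2000000 in
/-- for a bounded (local) spectral curve, the quantum Airy structure tensors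
are dominated by `Q` times the Painlevé I tensors at `u = 3^(-4/3) ρ`. -/
theorem stmt_0 {𝔞 : Type*} [Fintype 𝔞] [DecidableEq 𝔞] [Nonempty 𝔞]
    (θ : 𝔞 → ℤ → ℂ) (φ : 𝔞 × ℕ → 𝔞 × ℕ → ℂ)
    (Mθ ρ Mφ : ℝ) (hMθ : 0 < Mθ) (hρ : 0 < ρ) (hMφ : 0 ≤ Mφ)
    (hθneg : ∀ (a : 𝔞) (m : ℤ), m < 0 → θ a m = 0)
    (hθ : ∀ (a : 𝔞) (i : ℕ), ‖θ a (i : ℤ)‖ ≤ Mθ / ρ ^ (i + 1))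
    (hφ : ∀ (a b : 𝔞) (i j : ℕ), ‖φ (a, i) (b, j)‖ ≤ Mφ / ρ ^ (i + j))
    (Q u : ℝ)
    (hQ : Q = 2 * Mθ * max ((1 + ρ * Mφ)^2) (1 + 4 * ρ * Mφ))
    (hu : u = (3 : ℝ) ^ (-(4 : ℝ)/3) * ρ) :
    ∀ (a b c : 𝔞) (i j k : ℕ),
      ‖(genTensors θ φ).A (a, i) (b, j) (c, k)‖ ≤ Q * (PITensors u).A i j k ∧
      ‖(genTensors θ φ).B (a, i) (b, j) (c, k)‖ ≤ Q * (PITensors u).B i j k ∧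
      ‖(genTensors θ φ).C (a, i) (b, j) (c, k)‖ ≤ Q * (PITensors u).C i j k ∧
      ‖(genTensors θ φ).D (a, i)‖ ≤ Q * (PITensors u).D i := by
  intro a b c i j k
  -- generic setup
  set t : ℝ := (3:ℝ) ^ ((1:ℝ)/3) with htdef
  have ht0 : 0 < t := Real.rpow_pos_of_pos (by norm_num) _
  have ht3 : t ^ 3 = 3 := by
    rw [htdef, ← Real.rpow_natCast ((3:ℝ) ^ ((1:ℝ)/3)) 3, ← Real.rpow_mul (by norm_num)]
    norm_num
  have ht43 : 4/3 ≤ t := by nlinarith [sq_nonneg (t - 4/3), sq_nonneg (t + 4/3), sq_nonneg t]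
  have ht1 : (1:ℝ) ≤ t := by linarith
  have h3u : 3 * u = ρ / t := by
    have hmul : t * (3 * (3:ℝ) ^ (-(4:ℝ)/3)) = 1 := by
      rw [htdef, show (3:ℝ) * (3:ℝ) ^ (-(4:ℝ)/3) = (3:ℝ)^(1:ℝ) * (3:ℝ) ^ (-(4:ℝ)/3) by
        norm_num [Real.rpow_one], ← Real.rpow_add (by norm_num), ← Real.rpow_add (by norm_num)]
      norm_num
    rw [hu, eq_div_iff (ne_of_gt ht0)]
    linear_combination ρ * hmul
  have hu0 : 0 < u := by linarith [div_pos hρ ht0]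
  set M : ℝ := max ((1 + ρ * Mφ)^2) (1 + 4 * ρ * Mφ) with hMdef
  have hMsq : (1 + ρ * Mφ)^2 ≤ M := le_max_left _ _
  have hM4 : 1 + 4 * ρ * Mφ ≤ M := le_max_right _ _
  have hx0 : 0 ≤ ρ * Mφ := mul_nonneg hρ.le hMφ
  have hM1 : (1:ℝ) ≤ M := le_trans (by nlinarith) hMsq
  have hQ0 : 0 ≤ Q := by rw [hQ]; positivity
  have hρ' : ρ ≠ 0 := ne_of_gt hρ
  have ht' : t ≠ 0 := ne_of_gt ht0
  have hd : ∀ n : ℕ, (0:ℝ) < (Nat.doubleFactorial n : ℝ) := fun n => by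
    exact_mod_cast Nat.doubleFactorial_pos n
  have h1t : ∀ n : ℕ, (1:ℝ) ≤ t ^ n := fun n => one_le_pow₀ ht1
  have hNt : ∀ n : ℕ, (n:ℝ) ≤ t ^ (n+1) := nat_le_tpow ht43
  refine ⟨?_, ?_, ?_, ?_⟩
  · -- A bound
    simp only [genTensors, PITensors]
    split_ifs with h1 h2
    · -- both conditions hold
      obtain ⟨-, -, hi, hj, hk⟩ := h1
      have hb : ‖θ a 0‖ ≤ Mθ / ρ := by simpa using hθ a 0
      have he : Q * (1 / (6*u)) = Mθ * M * t / ρ := by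
        rw [hQ, show (6:ℝ)*u = 2*(3*u) by ring, h3u]
        field_simp
      rw [he]
      refine hb.trans ?_
      rw [div_le_div_iff₀ hρ hρ]
      have h1 : 1 ≤ M * t := by
        have h2 := mul_le_mul hM1 ht1 zero_le_one (le_trans zero_le_one hM1)
        linarith
      linarith [mul_le_mul_of_nonneg_right h1 (mul_pos hMθ hρ).le]
    · exact absurd ⟨h1.2.2.1, h1.2.2.2⟩ h2
    · simp only [norm_zero]
      positivity
    · simp only [norm_zero, mul_zero, le_refl]
  · -- B bound
    simp only [genTensors, PITensors]
    by_cases hcond : i + j ≤ k + 1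
    · rw [if_pos hcond]
      set n : ℕ := k + 1 - (i + j) with hn
      rw [show k + 2 - (i + j) = n + 1 by omega]
      have hb1 : ‖(if a = b ∧ b = c then
            θ a ((k:ℤ) - i - j + 1) * ((2*k+1).doubleFactorial : ℂ)
              / (((2*i+1).doubleFactorial : ℂ) * ((2*j-1).doubleFactorial : ℂ)) else 0)‖
          ≤ Mθ * ((2*k+1).doubleFactorial : ℝ)
              / (ρ^(n+1) * ((2*i+1).doubleFactorial : ℝ) * ((2*j-1).doubleFactorial : ℝ)) := by
        refine norm_ite_le _ _ (by positivity) (fun _ => ?_)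
        rw [norm_div, norm_mul, norm_mul]
        simp only [Complex.norm_natCast]
        rw [show ((k:ℤ) - i - j + 1) = ((n : ℕ) : ℤ) by push_cast; omega]
        calc ‖θ a (n:ℤ)‖ * ((2*k+1).doubleFactorial : ℝ)
              / (((2*i+1).doubleFactorial : ℝ) * ((2*j-1).doubleFactorial : ℝ))
            ≤ (Mθ / ρ^(n+1)) * ((2*k+1).doubleFactorial : ℝ)
              / (((2*i+1).doubleFactorial : ℝ) * ((2*j-1).doubleFactorial : ℝ)) := by
              gcongr <;> try exact hθ a n
          _ = Mθ * ((2*k+1).doubleFactorial : ℝ)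
              / (ρ^(n+1) * ((2*i+1).doubleFactorial : ℝ) * ((2*j-1).doubleFactorial : ℝ)) := by
              field_simp
      have hb2 : ‖(if a = b ∧ i = 0 ∧ j = 0 then
            θ a 0 * φ (a, 0) (c, k) * ((2*k-1).doubleFactorial : ℂ) else 0)‖
          ≤ ρ * Mφ * (Mθ * ((2*k-1).doubleFactorial : ℝ)
              / (ρ^(n+1) * ((2*i+1).doubleFactorial : ℝ) * ((2*j-1).doubleFactorial : ℝ))) := by
        refine norm_ite_le _ _ (by positivity) (fun h => ?_)
        obtain ⟨-, hi, hj⟩ := h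
        subst hi hj
        rw [norm_mul, norm_mul]
        simp only [Complex.norm_natCast]
        have h1 : ‖θ a 0‖ ≤ Mθ / ρ := by simpa using hθ a 0
        have h2 : ‖φ (a, 0) (c, k)‖ ≤ Mφ / ρ ^ k := by simpa using hφ a c 0 k
        calc ‖θ a 0‖ * ‖φ (a, 0) (c, k)‖ * ((2*k-1).doubleFactorial : ℝ)
            ≤ (Mθ / ρ) * (Mφ / ρ ^ k) * ((2*k-1).doubleFactorial : ℝ) := by
              have hn1 : (0:ℝ) ≤ ‖φ (a, 0) (c, k)‖ := norm_nonneg _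
              have hn2 : (0:ℝ) ≤ Mθ / ρ := by positivity
              exact mul_le_mul_of_nonneg_right
                (mul_le_mul h1 h2 hn1 hn2) (by positivity)
          _ = ρ * Mφ * (Mθ * ((2*k-1).doubleFactorial : ℝ)
              / (ρ^(n+1) * ((2*(0:ℕ)+1).doubleFactorial : ℝ) * ((2*(0:ℕ)-1).doubleFactorial : ℝ))) := by
              have hnk : n + 1 = k + 2 := by omega
              rw [hnk]
              norm_num [Nat.doubleFactorial]
              rw [pow_succ, pow_succ]
              field_simp
      refine le_trans (norm_add_le _ _) (le_trans (add_le_add hb1 hb2) ?_)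
      set X : ℝ := Mθ * ((2*k-1).doubleFactorial : ℝ)
        / (ρ^(n+1) * ((2*i+1).doubleFactorial : ℝ) * ((2*j-1).doubleFactorial : ℝ)) with hX
      have hX0 : 0 < X := by rw [hX]; positivity
      have hdfk : ((2*k+1).doubleFactorial : ℝ)
          = ((2*k+1 : ℕ) : ℝ) * ((2*k-1).doubleFactorial : ℝ) := by
        exact_mod_cast congrArg (Nat.cast : ℕ → ℝ) (df_odd k)
      have heL : Mθ * ((2*k+1).doubleFactorial : ℝ)
            / (ρ^(n+1) * ((2*i+1).doubleFactorial : ℝ) * ((2*j-1).doubleFactorial : ℝ))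
            + ρ * Mφ * X = (((2*k+1 : ℕ) : ℝ) + ρ * Mφ) * X := by
        rw [hX, hdfk]; ring
      have heR : Q * (((2*k+1).doubleFactorial : ℝ)
            / (2 * (3*u)^(n+1) * ((2*i+1).doubleFactorial : ℝ) * ((2*j-1).doubleFactorial : ℝ)))
          = M * t^(n+1) * (((2*k+1 : ℕ) : ℝ) * X) := by
        rw [hQ, h3u, hX, hdfk, div_pow]
        field_simp
      rw [heL, heR]
      have hK1 : (1:ℝ) ≤ ((2*k+1 : ℕ) : ℝ) := by exact_mod_cast Nat.one_le_iff_ne_zero.mpr (by omega)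
      have key : ((2*k+1 : ℕ) : ℝ) + ρ * Mφ ≤ M * t^(n+1) * ((2*k+1 : ℕ) : ℝ) := by
        set K' : ℝ := ((2*k+1 : ℕ) : ℝ) with hK'
        have hK'0 : (0:ℝ) < K' := lt_of_lt_of_le one_pos hK1
        have e1 : K' + ρ * Mφ ≤ (1 + 4*ρ*Mφ) * K' := by
          linarith [mul_nonneg hx0 (sub_nonneg.mpr hK1)]
        have e2 : (1 + 4*ρ*Mφ) * K' ≤ M * K' := mul_le_mul_of_nonneg_right hM4 hK'0.le
        have e3 : M * K' ≤ M * (t^(n+1) * K') :=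
          mul_le_mul_of_nonneg_left (le_mul_of_one_le_left hK'0.le (h1t (n+1))) (by linarith)
        calc K' + ρ * Mφ ≤ (1 + 4*ρ*Mφ) * K' := e1
          _ ≤ M * K' := e2
          _ ≤ M * (t^(n+1) * K') := e3
          _ = M * t^(n+1) * K' := by ring
      calc (((2*k+1 : ℕ) : ℝ) + ρ * Mφ) * X
          ≤ (M * t^(n+1) * ((2*k+1 : ℕ) : ℝ)) * X := by
            exact mul_le_mul_of_nonneg_right key hX0.le
        _ = M * t^(n+1) * (((2*k+1 : ℕ) : ℝ) * X) := by ring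
    · rw [if_neg hcond]
      have hz : θ a ((k:ℤ) - i - j + 1) = 0 := hθneg a _ (by omega)
      have hc2 : ¬(a = b ∧ i = 0 ∧ j = 0) := by rintro ⟨-, hi, hj⟩; omega
      rw [if_neg hc2, hz]
      simp
  · -- C bound
    simp only [genTensors, PITensors]
    by_cases hcond : i ≤ j + k + 2
    · rw [if_pos hcond]
      obtain ⟨N, hN⟩ : ∃ N : ℕ, j + k + 2 - i = N := ⟨_, rfl⟩
      rw [show j + k + 3 - i = N + 1 by omega]
      have hsum2 : ‖∑ m ∈ Finset.range (j + 2 - i), θ a (m:ℤ) * φ (a, j + 1 - i - m) (c, k)‖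
          ≤ ((j + 2 - i : ℕ) : ℝ) * (Mθ * Mφ / ρ ^ N) := by
        refine le_trans (norm_sum_le _ _) ?_
        have hcard := Finset.card_range (j + 2 - i)
        calc ∑ m ∈ Finset.range (j + 2 - i), ‖θ a (m:ℤ) * φ (a, j + 1 - i - m) (c, k)‖
            ≤ (Finset.range (j + 2 - i)).card • (Mθ * Mφ / ρ ^ N) := by
              refine Finset.sum_le_card_nsmul _ _ _ (fun m hm => ?_)
              rw [Finset.mem_range] at hm
              rw [norm_mul]
              calc ‖θ a (m:ℤ)‖ * ‖φ (a, j + 1 - i - m) (c, k)‖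
                  ≤ (Mθ / ρ ^ (m+1)) * (Mφ / ρ ^ ((j + 1 - i - m) + k)) :=
                    mul_le_mul (hθ a m) (hφ a c _ k) (norm_nonneg _) (by positivity)
                _ = Mθ * Mφ / ρ ^ ((m+1) + ((j + 1 - i - m) + k)) := by
                    rw [div_mul_div_comm, ← pow_add]
                _ = Mθ * Mφ / ρ ^ N := by
                    have he : (m+1) + ((j + 1 - i - m) + k) = N := by omega
                    rw [he]
          _ = ((j + 2 - i : ℕ) : ℝ) * (Mθ * Mφ / ρ ^ N) := by
              rw [hcard, nsmul_eq_mul]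
      have hsum3 : ‖∑ m ∈ Finset.range (k + 2 - i), θ a (m:ℤ) * φ (a, k + 1 - i - m) (b, j)‖
          ≤ ((k + 2 - i : ℕ) : ℝ) * (Mθ * Mφ / ρ ^ N) := by
        refine le_trans (norm_sum_le _ _) ?_
        have hcard := Finset.card_range (k + 2 - i)
        calc ∑ m ∈ Finset.range (k + 2 - i), ‖θ a (m:ℤ) * φ (a, k + 1 - i - m) (b, j)‖
            ≤ (Finset.range (k + 2 - i)).card • (Mθ * Mφ / ρ ^ N) := by
              refine Finset.sum_le_card_nsmul _ _ _ (fun m hm => ?_)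
              rw [Finset.mem_range] at hm
              rw [norm_mul]
              calc ‖θ a (m:ℤ)‖ * ‖φ (a, k + 1 - i - m) (b, j)‖
                  ≤ (Mθ / ρ ^ (m+1)) * (Mφ / ρ ^ ((k + 1 - i - m) + j)) :=
                    mul_le_mul (hθ a m) (hφ a b _ j) (norm_nonneg _) (by positivity)
                _ = Mθ * Mφ / ρ ^ ((m+1) + ((k + 1 - i - m) + j)) := by
                    rw [div_mul_div_comm, ← pow_add]
                _ = Mθ * Mφ / ρ ^ N := by
                    have he : (m+1) + ((k + 1 - i - m) + j) = N := by omega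
                    rw [he]
          _ = ((k + 2 - i : ℕ) : ℝ) * (Mθ * Mφ / ρ ^ N) := by
              rw [hcard, nsmul_eq_mul]
      have hb1 : ‖(if a = b ∧ b = c then
            θ a ((j:ℤ) + k - i + 2) * (((2*j+1).doubleFactorial : ℂ) * ((2*k+1).doubleFactorial : ℂ))
              / ((2*i+1).doubleFactorial : ℂ) else 0)‖
          ≤ Mθ * (((2*j+1).doubleFactorial : ℝ) * ((2*k+1).doubleFactorial : ℝ))
              / (ρ^(N+1) * ((2*i+1).doubleFactorial : ℝ)) := by
        refine norm_ite_le _ _ (by positivity) (fun _ => ?_)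
        rw [norm_div, norm_mul, norm_mul]
        simp only [Complex.norm_natCast]
        rw [show ((j:ℤ) + k - i + 2) = ((N : ℕ) : ℤ) by push_cast; omega]
        calc ‖θ a (N:ℤ)‖ * (((2*j+1).doubleFactorial : ℝ) * ((2*k+1).doubleFactorial : ℝ))
              / ((2*i+1).doubleFactorial : ℝ)
            ≤ (Mθ / ρ^(N+1)) * (((2*j+1).doubleFactorial : ℝ) * ((2*k+1).doubleFactorial : ℝ))
              / ((2*i+1).doubleFactorial : ℝ) := by
              gcongr <;> try exact hθ a N
          _ = Mθ * (((2*j+1).doubleFactorial : ℝ) * ((2*k+1).doubleFactorial : ℝ))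
              / (ρ^(N+1) * ((2*i+1).doubleFactorial : ℝ)) := by
              field_simp
              try ring
      have hb2 : ‖(if a = b then
            (∑ m ∈ Finset.range (j + 2 - i), θ a (m:ℤ) * φ (a, j + 1 - i - m) (c, k))
              * (((2*j+1).doubleFactorial : ℂ) * ((2*k-1).doubleFactorial : ℂ))
              / ((2*i+1).doubleFactorial : ℂ) else 0)‖
          ≤ ((j + 2 - i : ℕ) : ℝ) * (Mθ * Mφ / ρ ^ N)
              * (((2*j+1).doubleFactorial : ℝ) * ((2*k-1).doubleFactorial : ℝ))
              / ((2*i+1).doubleFactorial : ℝ) := by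
        refine norm_ite_le _ _ (by positivity) (fun _ => ?_)
        rw [norm_div, norm_mul, norm_mul]
        simp only [Complex.norm_natCast]
        gcongr <;> try exact hsum2
      have hb3 : ‖(if a = c then
            (∑ m ∈ Finset.range (k + 2 - i), θ a (m:ℤ) * φ (a, k + 1 - i - m) (b, j))
              * (((2*j-1).doubleFactorial : ℂ) * ((2*k+1).doubleFactorial : ℂ))
              / ((2*i+1).doubleFactorial : ℂ) else 0)‖
          ≤ ((k + 2 - i : ℕ) : ℝ) * (Mθ * Mφ / ρ ^ N)
              * (((2*j-1).doubleFactorial : ℝ) * ((2*k+1).doubleFactorial : ℝ))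
              / ((2*i+1).doubleFactorial : ℝ) := by
        refine norm_ite_le _ _ (by positivity) (fun _ => ?_)
        rw [norm_div, norm_mul, norm_mul]
        simp only [Complex.norm_natCast]
        gcongr <;> try exact hsum3
      have hb4 : ‖(if i = 0 then
            θ a 0 * φ (a, 0) (b, j) * φ (a, 0) (c, k)
              * (((2*j-1).doubleFactorial : ℂ) * ((2*k-1).doubleFactorial : ℂ)) else 0)‖
          ≤ (ρ * Mφ)^2 * (Mθ * (((2*j-1).doubleFactorial : ℝ) * ((2*k-1).doubleFactorial : ℝ))
              / (ρ^(N+1) * ((2*i+1).doubleFactorial : ℝ))) := by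
        refine norm_ite_le _ _ (by positivity) (fun hi => ?_)
        subst hi
        simp only [norm_mul, Complex.norm_natCast]
        have h1 : ‖θ a 0‖ ≤ Mθ / ρ := by simpa using hθ a 0
        have h2 : ‖φ (a, 0) (b, j)‖ ≤ Mφ / ρ ^ j := by simpa using hφ a b 0 j
        have h3 : ‖φ (a, 0) (c, k)‖ ≤ Mφ / ρ ^ k := by simpa using hφ a c 0 k
        calc ‖θ a 0‖ * ‖φ (a, 0) (b, j)‖ * ‖φ (a, 0) (c, k)‖
              * (((2*j-1).doubleFactorial : ℝ) * ((2*k-1).doubleFactorial : ℝ))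
            ≤ (Mθ / ρ) * (Mφ / ρ ^ j) * (Mφ / ρ ^ k)
              * (((2*j-1).doubleFactorial : ℝ) * ((2*k-1).doubleFactorial : ℝ)) := by
              gcongr <;> first | exact h1 | exact h2 | exact h3
          _ = (ρ * Mφ)^2 * (Mθ * (((2*j-1).doubleFactorial : ℝ) * ((2*k-1).doubleFactorial : ℝ))
              / (ρ^(N+1) * ((2*(0:ℕ)+1).doubleFactorial : ℝ))) := by
              have hnjk : N + 1 = j + k + 3 := by omega
              rw [hnjk]
              norm_num [Nat.doubleFactorial]
              field_simp
              ring
      refine le_trans (norm_add_le _ _) ?_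
      refine le_trans (add_le_add (norm_add_le _ _) le_rfl) ?_
      refine le_trans (add_le_add (add_le_add (norm_add_le _ _) le_rfl) le_rfl) ?_
      refine le_trans (add_le_add (add_le_add (add_le_add hb1 hb2) hb3) hb4) ?_
      -- now a purely real inequality
      set X : ℝ := Mθ * (((2*j-1).doubleFactorial : ℝ) * ((2*k-1).doubleFactorial : ℝ))
        / (ρ^(N+1) * ((2*i+1).doubleFactorial : ℝ)) with hX
      have hX0 : 0 < X := by rw [hX]; positivity
      have hdfj : ((2*j+1).doubleFactorial : ℝ)
          = ((2*j+1 : ℕ) : ℝ) * ((2*j-1).doubleFactorial : ℝ) := by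
        exact_mod_cast congrArg (Nat.cast : ℕ → ℝ) (df_odd j)
      have hdfk : ((2*k+1).doubleFactorial : ℝ)
          = ((2*k+1 : ℕ) : ℝ) * ((2*k-1).doubleFactorial : ℝ) := by
        exact_mod_cast congrArg (Nat.cast : ℕ → ℝ) (df_odd k)
      set J : ℝ := ((2*j+1 : ℕ) : ℝ) with hJ
      set K : ℝ := ((2*k+1 : ℕ) : ℝ) with hK
      set P : ℝ := ((j + 2 - i : ℕ) : ℝ) with hP
      set R : ℝ := ((k + 2 - i : ℕ) : ℝ) with hR
      set x : ℝ := ρ * Mφ with hx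
      have heL1 : Mθ * (((2*j+1).doubleFactorial : ℝ) * ((2*k+1).doubleFactorial : ℝ))
            / (ρ^(N+1) * ((2*i+1).doubleFactorial : ℝ)) = J * K * X := by
        rw [hX, hdfj, hdfk]; ring
      have heL2 : P * (Mθ * Mφ / ρ ^ N)
            * (((2*j+1).doubleFactorial : ℝ) * ((2*k-1).doubleFactorial : ℝ))
            / ((2*i+1).doubleFactorial : ℝ) = x * (P * J) * X := by
        rw [hX, hdfj, hx, pow_succ]
        field_simp
      have heL3 : R * (Mθ * Mφ / ρ ^ N)
            * (((2*j-1).doubleFactorial : ℝ) * ((2*k+1).doubleFactorial : ℝ))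
            / ((2*i+1).doubleFactorial : ℝ) = x * (R * K) * X := by
        rw [hX, hdfk, hx, pow_succ]
        field_simp
      have heR : Q * (((2*j+1).doubleFactorial : ℝ) * ((2*k+1).doubleFactorial : ℝ)
            / (2 * (3*u)^(N+1) * ((2*i+1).doubleFactorial : ℝ)))
          = M * t^(N+1) * (J * K) * X := by
        rw [hQ, h3u, hX, hdfj, hdfk, div_pow]
        field_simp
      rw [heL1, heL2, heL3, heR]
      have hJ1 : (1:ℝ) ≤ J := by rw [hJ]; exact_mod_cast Nat.one_le_iff_ne_zero.mpr (by omega)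
      have hK1 : (1:ℝ) ≤ K := by rw [hK]; exact_mod_cast Nat.one_le_iff_ne_zero.mpr (by omega)
      have hPN : P ≤ (N:ℝ) := by
        rw [hP]; exact_mod_cast (by omega : j + 2 - i ≤ N)
      have hRN : R ≤ (N:ℝ) := by
        rw [hR]; exact_mod_cast (by omega : k + 2 - i ≤ N)
      have hP0 : (0:ℝ) ≤ P := by rw [hP]; positivity
      have hR0 : (0:ℝ) ≤ R := by rw [hR]; positivity
      have hT1 : (1:ℝ) ≤ t^(N+1) := h1t (N+1)
      have hTN : (N:ℝ) ≤ t^(N+1) := hNt N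
      have hxx : 0 ≤ x := hx0
      have key : J * K + x * (P * J) + x * (R * K) + x^2 ≤ M * t^(N+1) * (J * K) := by
        set T : ℝ := t^(N+1) with hT
        have hJ0 : (0:ℝ) < J := lt_of_lt_of_le one_pos hJ1
        have hK0 : (0:ℝ) < K := lt_of_lt_of_le one_pos hK1
        have hT0 : (0:ℝ) < T := lt_of_lt_of_le one_pos hT1
        have hJK1 : (1:ℝ) ≤ J * K := by
          have := mul_le_mul hJ1 hK1 zero_le_one (le_trans zero_le_one hJ1)
          linarith
        have hTJK1 : (1:ℝ) ≤ T * (J * K) := by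
          have := mul_le_mul hT1 hJK1 zero_le_one (le_trans zero_le_one hT1)
          linarith
        have c1 : J * K ≤ T * (J * K) := le_mul_of_one_le_left (by positivity) hT1
        have c5 : J + K ≤ 2 * (J * K) := by
          linarith [mul_nonneg (sub_nonneg.mpr hJ1) (sub_nonneg.mpr hK1), hJK1]
        have c3 : P * J ≤ (N:ℝ) * J := mul_le_mul_of_nonneg_right hPN hJ0.le
        have c3' : R * K ≤ (N:ℝ) * K := mul_le_mul_of_nonneg_right hRN hK0.le
        have c6 : (N:ℝ) * (J + K) ≤ T * (2 * (J * K)) :=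
          mul_le_mul hTN c5 (by positivity) hT0.le
        have cB0 : P * J + R * K ≤ 2 * T * (J * K) := by
          have e : (N:ℝ) * J + (N:ℝ) * K = (N:ℝ) * (J + K) := by ring
          have e2 : T * (2 * (J * K)) = 2 * T * (J * K) := by ring
          linarith
        have cB : x * (P * J) + x * (R * K) ≤ x * (2 * T * (J * K)) := by
          have := mul_le_mul_of_nonneg_left cB0 hxx
          have e : x * (P * J + R * K) = x * (P * J) + x * (R * K) := by ring
          linarith
        have cC : x^2 ≤ x^2 * (T * (J * K)) :=
          le_mul_of_one_le_right (sq_nonneg x) hTJK1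
        have cD : (1 + x)^2 * (T * (J * K)) ≤ M * (T * (J * K)) :=
          mul_le_mul_of_nonneg_right hMsq (by positivity)
        calc J * K + x * (P * J) + x * (R * K) + x^2
            ≤ T * (J * K) + x * (2 * T * (J * K)) + x^2 * (T * (J * K)) := by linarith
          _ = (1 + x)^2 * (T * (J * K)) := by ring
          _ ≤ M * (T * (J * K)) := cD
          _ = M * T * (J * K) := by ring
      calc J * K * X + x * (P * J) * X + x * (R * K) * X + x^2 * X
          = (J * K + x * (P * J) + x * (R * K) + x^2) * X := by ring
        _ ≤ (M * t^(N+1) * (J * K)) * X := mul_le_mul_of_nonneg_right key hX0.le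
        _ = M * t^(N+1) * (J * K) * X := by ring
    · rw [if_neg hcond]
      have hz1 : θ a ((j:ℤ) + k - i + 2) = 0 := hθneg a _ (by omega)
      rw [show j + 2 - i = 0 by omega, show k + 2 - i = 0 by omega, hz1]
      simp [show i ≠ 0 by omega]
  · -- D bound
    simp only [genTensors, PITensors]
    by_cases hi0 : i = 0
    · subst hi0
      rw [if_pos rfl, if_neg (by norm_num : (0:ℕ) ≠ 1), if_pos rfl, if_neg (by norm_num : (0:ℕ) ≠ 1)]
      rw [add_zero, add_zero]
      have h1 : ‖θ a 0‖ ≤ Mθ / ρ := by simpa using hθ a 0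
      have h2 : ‖φ (a, 0) (a, 0)‖ ≤ Mφ := by simpa using hφ a a 0 0
      have hb : ‖θ a 0 * φ (a, 0) (a, 0) / 2 + θ a 1 / 8‖
          ≤ (Mθ / ρ) * Mφ / 2 + (Mθ / ρ^2) / 8 := by
        refine le_trans (norm_add_le _ _) (add_le_add ?_ ?_)
        · rw [norm_div, norm_mul]
          have : ‖(2:ℂ)‖ = 2 := by simp
          rw [this]
          gcongr
        · rw [norm_div]
          have : ‖(8:ℂ)‖ = 8 := by simp
          rw [this]
          have h3 : ‖θ a 1‖ ≤ Mθ / ρ^2 := by simpa using hθ a 1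
          gcongr
      refine hb.trans ?_
      have he : Q * (1 / (16 * (3*u)^2)) = Mθ * M * t^2 / (8 * ρ^2) := by
        rw [hQ, h3u, div_pow]
        field_simp
        ring
      rw [he]
      have heL : (Mθ / ρ) * Mφ / 2 + (Mθ / ρ^2) / 8 = (4 * ρ * Mφ * Mθ + Mθ) / (8 * ρ^2) := by
        field_simp
        ring
      rw [heL, div_le_div_iff₀ (by positivity) (by positivity)]
      have d1 : Mθ * (1 + 4*ρ*Mφ) ≤ Mθ * M := mul_le_mul_of_nonneg_left hM4 hMθ.le
      have d2 : Mθ * M ≤ Mθ * M * t^2 :=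
        le_mul_of_one_le_right (mul_nonneg hMθ.le (by linarith)) (h1t 2)
      have e : Mθ * (1 + 4*ρ*Mφ) = 4 * ρ * Mφ * Mθ + Mθ := by ring
      have hfin : 4 * ρ * Mφ * Mθ + Mθ ≤ Mθ * M * t^2 := by linarith
      linarith [mul_le_mul_of_nonneg_right hfin (by positivity : (0:ℝ) ≤ 8 * ρ^2)]
    · by_cases hi1 : i = 1
      · subst hi1
        rw [if_neg (by norm_num : (1:ℕ) ≠ 0), if_pos rfl, if_neg (by norm_num : (1:ℕ) ≠ 0), if_pos rfl]
        rw [zero_add, zero_add]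
        have h1 : ‖θ a 0‖ ≤ Mθ / ρ := by simpa using hθ a 0
        have hb : ‖θ a 0 / 24‖ ≤ (Mθ / ρ) / 24 := by
          rw [norm_div]
          have : ‖(24:ℂ)‖ = 24 := by simp
          rw [this]
          gcongr
        refine hb.trans ?_
        have he : Q * (1 / (48 * (3*u))) = Mθ * M * t / (24 * ρ) := by
          rw [hQ, h3u]
          field_simp
          ring
        rw [he, div_div, div_le_div_iff₀ (by positivity) (by positivity)]
        have d1 : Mθ ≤ Mθ * M := le_mul_of_one_le_right hMθ.le hM1
        have d2 : Mθ * M ≤ Mθ * M * t :=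
          le_mul_of_one_le_right (mul_nonneg hMθ.le (by linarith)) ht1
        linarith [mul_le_mul_of_nonneg_right (d1.trans d2) (by positivity : (0:ℝ) ≤ 24 * ρ)]
      · rw [if_neg hi0, if_neg hi1, if_neg hi0, if_neg hi1]
        simp
end
end

section
/- Let 𝔞 be a nonempty finite set and suppose all θ_{(a,m)} and φ_{(a,m),(b,m')} are real with θ_{(a,m)} ≥ 0, φ_{(a,m),(b,m')} ≥ 0, and θ_{(a,0)} > 0 for every a ∈ 𝔞 (positivity and regularity). Set Q₋ = min_{a∈𝔞} θ_{(a,0)}. Then the amplitudes F_{g;α_1,…,α_n} are real and, for all integers g ≥ 0, n ≥ 1 with 2g−2+n > 0 and α_i = (a_i,k_i) ∈ 𝔄, satisfy F_{g;α_1,…,α_n} ≥ δ_{a_1,…,a_n} · Q₋^{2g−2+n} · F^Ai_{g;k_1,…,k_n}, where δ_{a_1,…,a_n} equals 1 if a_1 = ⋯ = a_n and 0 otherwise. -/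
open scoped BigOperators

noncomputable section

namespace StmtAux

open List Finset

lemma eraseIdx_map' {α β : Type*} (f : α → β) (l : List α) (i : ℕ) :
    (l.map f).eraseIdx i = (l.eraseIdx i).map f := by
  induction l generalizing i with
  | nil => simp
  | cons x t ih => cases i <;> simp [List.eraseIdx, ih]

lemma filter_univ_mem' {n : ℕ} (s : Finset (Fin n)) :
    Finset.univ.filter (· ∈ s) = s := by ext i; simp

lemma length_selectIdx {ι : Type*} (l : List ι) (s : Finset (Fin l.length)) :
    (selectIdx l s).length = s.card := by
  simp only [selectIdx, List.length_map]
  have : ((List.finRange l.length).filter (fun i => decide (i ∈ s))).length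
      = (Finset.univ.filter (· ∈ s)).card := rfl
  rw [this, filter_univ_mem']

lemma mem_selectIdx {ι : Type*} {l : List ι} {s : Finset (Fin l.length)} {x : ι}
    (hx : x ∈ selectIdx l s) : x ∈ l := by
  simp only [selectIdx, List.mem_map, List.mem_filter] at hx
  obtain ⟨i, _, rfl⟩ := hx
  exact l.get_mem _

lemma filter_finRange_cast {n n' : ℕ} (h : n = n') (s : Finset (Fin n)) :
    ((List.finRange n').filter (fun i => decide (i ∈ s.map (finCongr h).toEmbedding))) =
      ((List.finRange n).filter (fun i => decide (i ∈ s))).map (Fin.cast h) := by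
  subst h
  simp only [finCongr_refl, Equiv.refl_toEmbedding, Finset.map_refl]
  rw [show Fin.cast rfl = (id : Fin n → Fin n) from rfl, List.map_id]

lemma map_compl_finCongr {n n' : ℕ} (h : n = n') (s : Finset (Fin n)) :
    (s.map (finCongr h).toEmbedding)ᶜ = sᶜ.map (finCongr h).toEmbedding := by
  subst h
  simp [finCongr_refl, Equiv.refl_toEmbedding, Finset.map_refl]

lemma selectIdx_map {α β : Type*} (f : α → β) (t : List α) (h : t.length = (t.map f).length)
    (s : Finset (Fin t.length)) :
    selectIdx (t.map f) (s.map (finCongr h).toEmbedding) = (selectIdx t s).map f := by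
  unfold selectIdx
  rw [filter_finRange_cast h s, List.map_map, List.map_map]
  apply List.map_congr_left
  intro x hx
  simp [List.get_eq_getElem, List.getElem_map, Fin.coe_cast, Function.comp]

lemma sum_fin_cast {n n' : ℕ} (h : n = n') (G : Fin n' → ℝ) :
    (∑ m : Fin n', G m) = ∑ m : Fin n, G (Fin.cast h m) := by
  subst h; rfl

lemma sum_finset_cast {n n' : ℕ} (h : n = n') (G : Finset (Fin n') → ℝ) :
    (∑ s : Finset (Fin n'), G s) = ∑ s : Finset (Fin n), G (s.map (finCongr h).toEmbedding) := by
  subst h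
  exact Finset.sum_congr rfl fun s _ => by simp [finCongr_refl, Equiv.refl_toEmbedding, Finset.map_refl]

end StmtAux
namespace StmtAux

section Generic

variable {ι : Type*} {deg : ι → ℕ} {T : AiryTensors ℝ ι} {F : ℕ → List ι → ℝ}
  (hF : IsAmplitudes deg T F)

include hF

lemma van (g : ℕ) (l : List ι) (h1 : 1 ≤ l.length)
    (h2 : 3*g + l.length ≤ (l.map deg).sum + 2) : F g l = 0 := by
  by_cases h3 : 2 < 2*g + l.length
  · exact hF.vanish g l h1 h3 (by omega)
  · have hg : g = 0 := by omega
    subst hg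
    rcases l with _ | ⟨x, _ | ⟨y, t⟩⟩
    · simp at h1
    · exact hF.zero_one x
    · have ht : t = [] := by
        simp only [List.length_cons] at h3
        have : t.length = 0 := by omega
        exact List.length_eq_zero_iff.mp this
      subst ht
      exact hF.zero_two x y

lemma small (l : List ι) (h1 : 1 ≤ l.length) (h2 : l.length ≤ 2) : F 0 l = 0 := by
  rcases l with _ | ⟨x, _ | ⟨y, t⟩⟩
  · simp at h1
  · exact hF.zero_one x
  · have ht : t = [] := by
      simp only [List.length_cons] at h2
      exact List.length_eq_zero_iff.mp (by omega)
    subst ht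
    exact hF.zero_two x y

lemma vanHead (g : ℕ) (μ : ι) (l : List ι) (h : 3*g + l.length ≤ deg μ + 1) :
    F g (μ :: l) = 0 := by
  apply van hF g _ (by simp)
  simp only [List.map_cons, List.sum_cons, List.length_cons]
  have : 0 ≤ (l.map deg).sum := Nat.zero_le _
  omega

lemma vanSecond (g : ℕ) (μ ν : ι) (l : List ι) (h : 3*g + l.length ≤ deg ν) :
    F g (μ :: ν :: l) = 0 := by
  apply van hF g _ (by simp)
  simp only [List.map_cons, List.sum_cons, List.length_cons]
  have h1 : 0 ≤ (l.map deg).sum := Nat.zero_le _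
  omega

lemma amp_nonneg (hA : ∀ x y z, 0 ≤ T.A x y z) (hB : ∀ x y z, 0 ≤ T.B x y z)
    (hC : ∀ x y z, 0 ≤ T.C x y z) (hD : ∀ x, 0 ≤ T.D x) :
    ∀ g (l : List ι), 1 ≤ l.length → 0 ≤ F g l := by
  have key : ∀ N g (l : List ι), 2*g + l.length ≤ N → 1 ≤ l.length → 0 ≤ F g l := by
    intro N
    induction N with
    | zero => intro g l hN h1; omega
    | succ N ih =>
      intro g l hN h1
      rcases l with _ | ⟨α, t⟩
      · simp at h1
      have ihcons : ∀ g' (μ : ι) (l' : List ι), 2*g' + (l'.length + 1) ≤ N →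
          0 ≤ F g' (μ :: l') := by
        intro g' μ l' hw
        exact ih g' (μ :: l') (by simpa using hw) (by simp)
      by_cases hrec : 4 ≤ 2*g + (t.length + 1)
      · rw [hF.recur g α t hrec]
        simp only [List.length_cons] at hN
        apply add_nonneg
        · apply Finset.sum_nonneg; intro m _
          apply tsum_nonneg; intro μ
          apply mul_nonneg (hB _ _ _)
          apply ihcons g μ _
          have hle : (t.eraseIdx ↑m).length = t.length - 1 := by
            rw [List.length_eraseIdx]; simp [m.isLt]
          have hm := m.isLt
          omega
        · apply mul_nonneg (by norm_num)
          apply tsum_nonneg; intro μ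
          apply tsum_nonneg; intro ν
          apply mul_nonneg (hC _ _ _)
          apply add_nonneg
          · split_ifs with hg
            · exact le_rfl
            · exact ihcons (g-1) μ (ν :: t) (by simp only [List.length_cons]; omega)
          · apply Finset.sum_nonneg; intro g₁ hg₁
            rw [Finset.mem_range] at hg₁
            apply Finset.sum_nonneg; intro s _
            have hcard : s.card + sᶜ.card = t.length := by
              rw [Finset.card_add_card_compl]; simp
            have hc1 : (selectIdx t s).length = s.card := length_selectIdx t s
            have hc2 : (selectIdx t sᶜ).length = sᶜ.card := length_selectIdx t sᶜ
            by_cases e1 : g₁ = 0 ∧ s.card ≤ 1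
            · rw [e1.1, small hF (μ :: selectIdx t s) (by simp) (by simp [hc1]; omega), zero_mul]
            by_cases e2 : g - g₁ = 0 ∧ sᶜ.card ≤ 1
            · rw [e2.1, small hF (ν :: selectIdx t sᶜ) (by simp) (by simp [hc2]; omega), mul_zero]
            apply mul_nonneg
            · exact ihcons g₁ μ _ (by rw [hc1]; omega)
            · exact ihcons (g - g₁) ν _ (by rw [hc2]; omega)
      · simp only [List.length_cons] at hrec hN
        have hcase : (g = 0 ∧ t.length + 1 ≤ 2) ∨ (g = 0 ∧ t.length = 2) ∨ (g = 1 ∧ t.length = 0) := by omega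
        rcases hcase with ⟨hg, hl⟩ | ⟨hg, hl⟩ | ⟨hg, hl⟩
        · rw [hg, small hF (α :: t) (by simp) (by simp; omega)]
        · subst hg
          rcases t with _ | ⟨y, _ | ⟨z, t'⟩⟩ <;> simp only [List.length_cons, List.length_nil] at hl <;> try omega
          have ht' : t' = [] := List.length_eq_zero_iff.mp (by omega)
          subst ht'
          rw [hF.base_A α y z]
          exact hA _ _ _
        · subst hg
          have ht : t = [] := List.length_eq_zero_iff.mp hl
          subst ht
          rw [hF.base_D α]
          exact hD _
  intro g l h1
  exact key (2*g + l.length) g l le_rfl h1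

end Generic

end StmtAux
namespace StmtAux

lemma summable_nat (c : ℕ → ℝ) (M : ℕ) (h : ∀ i, M ≤ i → c i = 0) : Summable c :=
  summable_of_ne_finset_zero (s := Finset.range M)
    (fun i hi => h i (by simpa using hi))

lemma summable_prodnat {𝔞 : Type*} [Fintype 𝔞] (c : 𝔞 × ℕ → ℝ) (M : ℕ)
    (h : ∀ μ, M ≤ μ.2 → c μ = 0) : Summable c :=
  summable_of_ne_finset_zero (s := Finset.univ ×ˢ Finset.range M)
    (fun μ hμ => h μ (by simp [Finset.mem_product] at hμ; omega))

lemma tsum_comp {𝔞 : Type*} [Fintype 𝔞] (a : 𝔞) (c : ℕ → ℝ) (d : 𝔞 × ℕ → ℝ) (M : ℕ)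
    (hc : ∀ i, M ≤ i → c i = 0) (hd : ∀ μ, M ≤ μ.2 → d μ = 0)
    (hd0 : ∀ μ, 0 ≤ d μ) (hle : ∀ i, c i ≤ d (a, i)) :
    ∑' i, c i ≤ ∑' μ, d μ :=
  Summable.tsum_le_tsum_of_inj (fun i => (a, i)) (fun i j hij => congrArg Prod.snd hij)
    (fun μ _ => hd0 μ) hle (summable_nat c M hc) (summable_prodnat d M hd)

end StmtAux
set_option maxHeartbeats 2000000 in
/-- lower bound of the amplitudes of a positive regular spectral curve by the
Airy amplitudes. -/
theorem stmt_2 {𝔞 : Type*} [Fintype 𝔞] [DecidableEq 𝔞] [Nonempty 𝔞]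
    (θ : 𝔞 → ℤ → ℝ) (φ : 𝔞 × ℕ → 𝔞 × ℕ → ℝ)
    (hθneg : ∀ (a : 𝔞) (m : ℤ), m < 0 → θ a m = 0)
    (hθpos : ∀ (a : 𝔞) (m : ℕ), 0 ≤ θ a (m : ℤ))
    (hφpos : ∀ α β, 0 ≤ φ α β)
    (hreg : ∀ a : 𝔞, 0 < θ a 0)
    (Qm : ℝ) (hQm : Qm = Finset.univ.inf' Finset.univ_nonempty (fun a : 𝔞 => θ a 0))
    (F : ℕ → List (𝔞 × ℕ) → ℝ) (hF : IsAmplitudes Prod.snd (genTensors θ φ) F)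
    (FAi : ℕ → List ℕ → ℝ) (hFAi : IsAmplitudes id AiryT FAi) :
    ∀ (g n : ℕ), 1 ≤ n → 2 < 2 * g + n → ∀ α : Fin n → 𝔞 × ℕ,
      (if ∀ i j : Fin n, (α i).1 = (α j).1 then (1 : ℝ) else 0) * Qm ^ (2 * g + n - 2) *
          FAi g (List.ofFn (fun i => (α i).2))
        ≤ F g (List.ofFn α) := by
  -- basic positivity facts
  have hθz : ∀ (a : 𝔞) (z : ℤ), 0 ≤ θ a z := by
    intro a z
    rcases z with n | n
    · exact hθpos a n
    · rw [hθneg a _ (Int.negSucc_lt_zero n)]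
  have dfpos : ∀ n : ℕ, (0:ℝ) < (Nat.doubleFactorial n : ℝ) := fun n => by
    exact_mod_cast Nat.doubleFactorial_pos n
  have hQpos : 0 < Qm := by
    rw [hQm]
    exact (Finset.lt_inf'_iff _).mpr (fun a _ => hreg a)
  have hQle : ∀ a : 𝔞, Qm ≤ θ a 0 := fun a => by
    rw [hQm]; exact Finset.inf'_le _ (Finset.mem_univ a)
  -- nonnegativity of the tensors
  have gA_nn : ∀ x y z, 0 ≤ (genTensors θ φ).A x y z := by
    intro x y z
    simp only [genTensors]
    split_ifs with h
    · exact hθz _ _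
    · exact le_rfl
  have gB_nn : ∀ x y z, 0 ≤ (genTensors θ φ).B x y z := by
    intro x y z
    simp only [genTensors]
    apply add_nonneg
    · split_ifs with h
      · exact div_nonneg (mul_nonneg (hθz _ _) (dfpos _).le)
          (mul_nonneg (dfpos _).le (dfpos _).le)
      · exact le_rfl
    · split_ifs with h
      · exact mul_nonneg (mul_nonneg (hθz _ _) (hφpos _ _)) (dfpos _).le
      · exact le_rfl
  have gC_nn : ∀ x y z, 0 ≤ (genTensors θ φ).C x y z := by
    intro x y z
    simp only [genTensors]
    have hsum : ∀ (aa : 𝔞) (k : ℕ) (w : 𝔞 × ℕ) (kk : ℕ),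
        0 ≤ ∑ m ∈ Finset.range k, θ aa (m : ℤ) * φ (aa, kk - m) w :=
      fun aa k w kk => Finset.sum_nonneg fun m _ => mul_nonneg (hθz _ _) (hφpos _ _)
    apply add_nonneg
    apply add_nonneg
    apply add_nonneg
    · split_ifs with h
      · exact div_nonneg (mul_nonneg (hθz _ _) (mul_nonneg (dfpos _).le (dfpos _).le)) (dfpos _).le
      · exact le_rfl
    · split_ifs with h
      · exact div_nonneg (mul_nonneg (hsum _ _ _ _) (mul_nonneg (dfpos _).le (dfpos _).le)) (dfpos _).le
      · exact le_rfl
    · split_ifs with h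
      · exact div_nonneg (mul_nonneg (hsum _ _ _ _) (mul_nonneg (dfpos _).le (dfpos _).le)) (dfpos _).le
      · exact le_rfl
    · split_ifs with h
      · exact mul_nonneg (mul_nonneg (mul_nonneg (hθz _ _) (hφpos _ _)) (hφpos _ _))
          (mul_nonneg (dfpos _).le (dfpos _).le)
      · exact le_rfl
  have gD_nn : ∀ x, 0 ≤ (genTensors θ φ).D x := by
    intro x
    simp only [genTensors]
    apply add_nonneg
    · split_ifs with h
      · apply add_nonneg
        · exact div_nonneg (mul_nonneg (hθz _ _) (hφpos _ _)) (by norm_num)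
        · exact div_nonneg (hθz _ _) (by norm_num)
      · exact le_rfl
    · split_ifs with h
      · exact div_nonneg (hθz _ _) (by norm_num)
      · exact le_rfl
  have aA_nn : ∀ x y z : ℕ, 0 ≤ AiryT.A x y z := by
    intro x y z; simp only [AiryT]; split_ifs <;> norm_num
  have aB_nn : ∀ x y z : ℕ, 0 ≤ AiryT.B x y z := by
    intro x y z; simp only [AiryT]; split_ifs with h
    · exact div_nonneg (dfpos _).le (mul_nonneg (dfpos _).le (dfpos _).le)
    · exact le_rfl
  have aC_nn : ∀ x y z : ℕ, 0 ≤ AiryT.C x y z := by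
    intro x y z; simp only [AiryT]; split_ifs with h
    · exact div_nonneg (mul_nonneg (dfpos _).le (dfpos _).le) (dfpos _).le
    · exact le_rfl
  have aD_nn : ∀ x : ℕ, 0 ≤ AiryT.D x := by
    intro x; simp only [AiryT]; split_ifs <;> norm_num
  have Fnn : ∀ g (l : List (𝔞 × ℕ)), 1 ≤ l.length → 0 ≤ F g l :=
    StmtAux.amp_nonneg hF gA_nn gB_nn gC_nn gD_nn
  have Ann : ∀ g (l : List ℕ), 1 ≤ l.length → 0 ≤ FAi g l :=
    StmtAux.amp_nonneg hFAi aA_nn aB_nn aC_nn aD_nn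
  -- tensor comparison
  have TB : ∀ (aa : 𝔞) (x y : 𝔞 × ℕ) (k : ℕ), x.1 = aa → y.1 = aa →
      Qm * AiryT.B x.2 y.2 k ≤ (genTensors θ φ).B x y (aa, k) := by
    intro aa x y k hx hy
    simp only [genTensors, AiryT]
    by_cases h : x.2 + y.2 = k + 1
    · rw [if_pos h]
      rw [if_pos (show x.1 = y.1 ∧ y.1 = (aa, k).1 from ⟨by rw [hx, hy], hy⟩)]
      have harg : ((k : ℤ) - (x.2 : ℕ) - (y.2 : ℕ) + 1) = (0 : ℤ) := by push_cast; omega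
      rw [harg, hx]
      have hv : (0:ℝ) ≤ (Nat.doubleFactorial (2*k+1) : ℝ) /
          ((Nat.doubleFactorial (2*x.2+1) : ℝ) * (Nat.doubleFactorial (2*y.2-1) : ℝ)) :=
        div_nonneg (dfpos _).le (mul_nonneg (dfpos _).le (dfpos _).le)
      have h1 : Qm * ((Nat.doubleFactorial (2*k+1) : ℝ) /
          ((Nat.doubleFactorial (2*x.2+1) : ℝ) * (Nat.doubleFactorial (2*y.2-1) : ℝ)))
          ≤ θ aa 0 * (Nat.doubleFactorial (2*k+1) : ℝ) /
          ((Nat.doubleFactorial (2*x.2+1) : ℝ) * (Nat.doubleFactorial (2*y.2-1) : ℝ)) := by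
        rw [mul_div_assoc]
        exact mul_le_mul_of_nonneg_right (hQle aa) hv
      refine le_trans h1 (le_add_of_nonneg_right ?_)
      split_ifs with h2
      · exact mul_nonneg (mul_nonneg (hθz _ _) (hφpos _ _)) (dfpos _).le
      · exact le_rfl
    · rw [if_neg h, mul_zero]
      exact gB_nn x y (aa, k)
  have TC : ∀ (aa : 𝔞) (x : 𝔞 × ℕ) (i j : ℕ), x.1 = aa →
      Qm * AiryT.C x.2 i j ≤ (genTensors θ φ).C x (aa, i) (aa, j) := by
    intro aa x i j hx
    by_cases h : x.2 = i + j + 2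
    · have hC4 : 0 ≤ (if x.2 = 0 then θ aa 0 * φ (aa, 0) (aa, i) * φ (aa, 0) (aa, j) *
          ((Nat.doubleFactorial (2*i-1) : ℝ) * (Nat.doubleFactorial (2*j-1) : ℝ)) else 0) := by
        split_ifs with h2
        · exact mul_nonneg (mul_nonneg (mul_nonneg (hθz _ _) (hφpos _ _)) (hφpos _ _))
            (mul_nonneg (dfpos _).le (dfpos _).le)
        · exact le_rfl
      have hsum : ∀ (k : ℕ) (w : 𝔞 × ℕ) (d1 d2 : ℕ),
          0 ≤ (∑ m ∈ Finset.range (k + 2 - x.2), θ aa (m : ℤ) * φ (aa, k + 1 - x.2 - m) w) *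
            ((Nat.doubleFactorial d1 : ℝ) * (Nat.doubleFactorial d2 : ℝ)) /
            (Nat.doubleFactorial (2*x.2+1) : ℝ) := by
        intro k w d1 d2
        exact div_nonneg (mul_nonneg
          (Finset.sum_nonneg fun m _ => mul_nonneg (hθz _ _) (hφpos _ _))
          (mul_nonneg (dfpos _).le (dfpos _).le)) (dfpos _).le
      simp only [genTensors, AiryT]
      rw [if_pos h]
      rw [if_pos (show x.1 = aa ∧ True from ⟨hx, trivial⟩), if_pos hx, if_pos hx]
      have harg : ((i : ℤ) + (j : ℤ) - ((x.2 : ℕ) : ℤ) + 2) = (0 : ℤ) := by push_cast; omega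
      rw [harg, hx]
      have hv : (0:ℝ) ≤ ((Nat.doubleFactorial (2*i+1) : ℝ) * (Nat.doubleFactorial (2*j+1) : ℝ)) /
          (Nat.doubleFactorial (2*x.2+1) : ℝ) :=
        div_nonneg (mul_nonneg (dfpos _).le (dfpos _).le) (dfpos _).le
      have h1 : Qm * (((Nat.doubleFactorial (2*i+1) : ℝ) * (Nat.doubleFactorial (2*j+1) : ℝ)) /
          (Nat.doubleFactorial (2*x.2+1) : ℝ))
          ≤ θ aa 0 * ((Nat.doubleFactorial (2*i+1) : ℝ) * (Nat.doubleFactorial (2*j+1) : ℝ)) /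
          (Nat.doubleFactorial (2*x.2+1) : ℝ) := by
        rw [mul_div_assoc (θ aa 0)]
        exact mul_le_mul_of_nonneg_right (hQle aa) hv
      refine le_trans h1 ?_
      refine le_trans (le_add_of_nonneg_right (hsum i (aa, j) (2*i+1) (2*j-1))) ?_
      refine le_trans (le_add_of_nonneg_right (hsum j (aa, i) (2*i-1) (2*j+1))) ?_
      exact le_add_of_nonneg_right hC4
    · simp only [AiryT]
      rw [if_neg h, mul_zero]
      exact gC_nn x (aa, i) (aa, j)
  
  -- main induction
  have main : ∀ N g (l : List (𝔞 × ℕ)) (aa : 𝔞), 2*g + l.length ≤ N → 1 ≤ l.length →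
      2 < 2*g + l.length → (∀ x ∈ l, x.1 = aa) →
      Qm ^ (2*g + l.length - 2) * FAi g (l.map Prod.snd) ≤ F g l := by
    intro N
    induction N with
    | zero => intro g l aa hN h1 h2 hd; omega
    | succ N ih =>
      intro g l aa hN h1 h2 hd
      rcases l with _ | ⟨α, t⟩
      · simp at h1
      simp only [List.length_cons] at hN h2 ⊢
      have hdα : α.1 = aa := hd α List.mem_cons_self
      by_cases hrec : 4 ≤ 2*g + (t.length + 1)
      · -- recursive case
        obtain ⟨e, he⟩ : ∃ e, 2*g + t.length = e + 3 := ⟨2*g + t.length - 3, by omega⟩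
        have h' : t.length = (t.map Prod.snd).length := (List.length_map Prod.snd).symm
        have hAiry : FAi g (α.2 :: t.map Prod.snd) =
            (∑ m : Fin t.length, ∑' i : ℕ, AiryT.B α.2 (t.get m).2 i *
                FAi g (i :: (t.eraseIdx m.1).map Prod.snd))
            + (1/2) * ∑' i : ℕ, ∑' j : ℕ, AiryT.C α.2 i j *
                ((if g = 0 then 0 else FAi (g-1) (i :: j :: t.map Prod.snd))
                 + ∑ g₁ ∈ Finset.range (g+1), ∑ s : Finset (Fin t.length),
                     FAi g₁ (i :: (selectIdx t s).map Prod.snd) *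
                       FAi (g-g₁) (j :: (selectIdx t sᶜ).map Prod.snd)) := by
          rw [hFAi.recur g α.2 (t.map Prod.snd) (by rw [← h']; exact hrec)]
          congr 1
          · rw [StmtAux.sum_fin_cast h']
            refine Finset.sum_congr rfl fun m _ => tsum_congr fun i => ?_
            have e1 : (t.map Prod.snd).get (Fin.cast h' m) = (t.get m).2 := by
              simp [List.get_eq_getElem, Fin.coe_cast]
            have e2 : (t.map Prod.snd).eraseIdx (Fin.cast h' m).1
                = (t.eraseIdx m.1).map Prod.snd := by
              rw [show ((Fin.cast h' m) : ℕ) = (m : ℕ) from rfl, StmtAux.eraseIdx_map']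
            rw [e1, e2]
          · congr 1
            refine tsum_congr fun i => tsum_congr fun j => ?_
            congr 2
            refine Finset.sum_congr rfl fun g₁ _ => ?_
            rw [StmtAux.sum_finset_cast h']
            refine Finset.sum_congr rfl fun s _ => ?_
            rw [StmtAux.selectIdx_map Prod.snd t h' s, StmtAux.map_compl_finCongr h' s,
              StmtAux.selectIdx_map Prod.snd t h' sᶜ]
        rw [hF.recur g α t hrec, List.map_cons, hAiry]
        rw [show 2*g + (t.length + 1) - 2 = e + 2 from by omega]
        set M := 3*g + t.length + 5 with hM
        have hcast : ∀ x : 𝔞 × ℕ, Prod.snd x = x.2 := fun _ => rfl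
        rw [mul_add, Finset.mul_sum]
        apply add_le_add
        · -- B part
          apply Finset.sum_le_sum
          intro m _
          rw [← tsum_mul_left]
          have hlen : (t.eraseIdx (m : ℕ)).length = t.length - 1 := by
            rw [List.length_eraseIdx]; simp [m.isLt]
          apply StmtAux.tsum_comp aa _ _ M
          · intro i hi
            rw [StmtAux.vanHead hFAi g i _ (by simp only [id_eq, List.length_map, hlen]; omega),
              mul_zero, mul_zero]
          · intro μ hμ
            rw [StmtAux.vanHead hF g μ _ (by simp only [hcast, hlen]; omega), mul_zero]
          · intro μ
            exact mul_nonneg (gB_nn _ _ _) (Fnn g _ (by simp))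
          · intro i
            have hdiag : ∀ x ∈ (aa, i) :: t.eraseIdx (m : ℕ), x.1 = aa := by
              intro x hx
              rcases List.mem_cons.mp hx with h | h
              · rw [h]
              · exact hd x (List.mem_cons_of_mem _ (List.mem_of_mem_eraseIdx h))
            have hih := ih g ((aa, i) :: t.eraseIdx (m : ℕ)) aa
              (by have hm := m.isLt; simp only [List.length_cons, hlen]; omega) (by simp)
              (by have hm := m.isLt; simp only [List.length_cons, hlen]; omega) hdiag
            simp only [List.map_cons, List.length_cons, hlen] at hih
            have hm := m.isLt
            rw [show 2*g + (t.length - 1 + 1) - 2 = e + 1 from by omega] at hih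
            have hdm : (t.get m).1 = aa := hd _ (List.mem_cons_of_mem _ (List.get_mem t m))
            calc Qm ^ (e+2) * (AiryT.B α.2 (t.get m).2 i * FAi g (i :: (t.eraseIdx (m : ℕ)).map Prod.snd))
                = (Qm * AiryT.B α.2 (t.get m).2 i) *
                  (Qm ^ (e+1) * FAi g (i :: (t.eraseIdx (m : ℕ)).map Prod.snd)) := by ring
              _ ≤ (genTensors θ φ).B α (t.get m) (aa, i) * F g ((aa, i) :: t.eraseIdx (m : ℕ)) := by
                  apply mul_le_mul (TB aa α (t.get m) i hdα hdm) hih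
                  · exact mul_nonneg (pow_nonneg hQpos.le _) (Ann g _ (by simp))
                  · exact gB_nn _ _ _
        · -- C part
          refine (fun X Y h => by linarith :
            ∀ X Y : ℝ, Qm ^ (e+2) * X ≤ Y → Qm ^ (e+2) * (1/2 * X) ≤ 1/2 * Y) _ _ ?_
          rw [← tsum_mul_left]
          have hXAnn : ∀ i j : ℕ,
              0 ≤ ((if g = 0 then (0:ℝ) else FAi (g-1) (i :: j :: t.map Prod.snd))
               + ∑ g₁ ∈ Finset.range (g+1), ∑ s : Finset (Fin t.length),
                   FAi g₁ (i :: (selectIdx t s).map Prod.snd) *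
                     FAi (g-g₁) (j :: (selectIdx t sᶜ).map Prod.snd)) := by
            intro i j
            apply add_nonneg
            · split_ifs with hg
              · exact le_rfl
              · exact Ann _ _ (by simp)
            · refine Finset.sum_nonneg fun g₁ _ => Finset.sum_nonneg fun s _ => ?_
              exact mul_nonneg (Ann _ _ (by simp)) (Ann _ _ (by simp))
          have hXFnn : ∀ μ ν : 𝔞 × ℕ,
              0 ≤ ((if g = 0 then (0:ℝ) else F (g-1) (μ :: ν :: t))
               + ∑ g₁ ∈ Finset.range (g+1), ∑ s : Finset (Fin t.length),
                   F g₁ (μ :: selectIdx t s) * F (g-g₁) (ν :: selectIdx t sᶜ)) := by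
            intro μ ν
            apply add_nonneg
            · split_ifs with hg
              · exact le_rfl
              · exact Fnn _ _ (by simp)
            · refine Finset.sum_nonneg fun g₁ _ => Finset.sum_nonneg fun s _ => ?_
              exact mul_nonneg (Fnn _ _ (by simp)) (Fnn _ _ (by simp))
          have hcard : ∀ s : Finset (Fin t.length), s.card ≤ t.length := by
            intro s
            have := Finset.card_le_univ s
            simpa using this
          have hXAz : ∀ i j : ℕ, M ≤ i ∨ M ≤ j →
              ((if g = 0 then (0:ℝ) else FAi (g-1) (i :: j :: t.map Prod.snd))
               + ∑ g₁ ∈ Finset.range (g+1), ∑ s : Finset (Fin t.length),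
                   FAi g₁ (i :: (selectIdx t s).map Prod.snd) *
                     FAi (g-g₁) (j :: (selectIdx t sᶜ).map Prod.snd)) = 0 := by
            intro i j hij
            have h1 : (if g = 0 then (0:ℝ) else FAi (g-1) (i :: j :: t.map Prod.snd)) = 0 := by
              split_ifs with hg
              · rfl
              · rcases hij with hi | hj
                · exact StmtAux.vanHead hFAi (g-1) i _
                    (by simp only [id_eq, List.length_cons, List.length_map]; omega)
                · exact StmtAux.vanSecond hFAi (g-1) i j _
                    (by simp only [id_eq, List.length_map]; omega)
            have h2 : (∑ g₁ ∈ Finset.range (g+1), ∑ s : Finset (Fin t.length),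
                   FAi g₁ (i :: (selectIdx t s).map Prod.snd) *
                     FAi (g-g₁) (j :: (selectIdx t sᶜ).map Prod.snd)) = 0 := by
              refine Finset.sum_eq_zero fun g₁ hg₁ => Finset.sum_eq_zero fun s _ => ?_
              have hg₁le : g₁ ≤ g := by
                have := Finset.mem_range.mp hg₁; omega
              rcases hij with hi | hj
              · rw [StmtAux.vanHead hFAi g₁ i _ (by
                  simp only [id_eq, List.length_map, StmtAux.length_selectIdx]
                  have := hcard s; omega), zero_mul]
              · rw [StmtAux.vanHead hFAi (g-g₁) j _ (by
                  simp only [id_eq, List.length_map, StmtAux.length_selectIdx]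
                  have := hcard sᶜ; omega), mul_zero]
            rw [h1, h2, add_zero]
          have hXFz : ∀ μ ν : 𝔞 × ℕ, M ≤ μ.2 ∨ M ≤ ν.2 →
              ((if g = 0 then (0:ℝ) else F (g-1) (μ :: ν :: t))
               + ∑ g₁ ∈ Finset.range (g+1), ∑ s : Finset (Fin t.length),
                   F g₁ (μ :: selectIdx t s) * F (g-g₁) (ν :: selectIdx t sᶜ)) = 0 := by
            intro μ ν hij
            have h1 : (if g = 0 then (0:ℝ) else F (g-1) (μ :: ν :: t)) = 0 := by
              split_ifs with hg
              · rfl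
              · rcases hij with hi | hj
                · exact StmtAux.vanHead hF (g-1) μ _
                    (by simp only [List.length_cons, hcast]; omega)
                · exact StmtAux.vanSecond hF (g-1) μ ν _ (by omega)
            have h2 : (∑ g₁ ∈ Finset.range (g+1), ∑ s : Finset (Fin t.length),
                   F g₁ (μ :: selectIdx t s) * F (g-g₁) (ν :: selectIdx t sᶜ)) = 0 := by
              refine Finset.sum_eq_zero fun g₁ hg₁ => Finset.sum_eq_zero fun s _ => ?_
              have hg₁le : g₁ ≤ g := by
                have := Finset.mem_range.mp hg₁; omega
              rcases hij with hi | hj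
              · rw [StmtAux.vanHead hF g₁ μ _ (by
                  simp only [hcast, StmtAux.length_selectIdx]
                  have := hcard s; omega), zero_mul]
              · rw [StmtAux.vanHead hF (g-g₁) ν _ (by
                  simp only [hcast, StmtAux.length_selectIdx]
                  have := hcard sᶜ; omega), mul_zero]
            rw [h1, h2, add_zero]
          apply StmtAux.tsum_comp aa _ _ M
          · intro i hi
            have hz : (∑' j : ℕ, AiryT.C α.2 i j *
                ((if g = 0 then (0:ℝ) else FAi (g-1) (i :: j :: t.map Prod.snd))
                 + ∑ g₁ ∈ Finset.range (g+1), ∑ s : Finset (Fin t.length),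
                     FAi g₁ (i :: (selectIdx t s).map Prod.snd) *
                       FAi (g-g₁) (j :: (selectIdx t sᶜ).map Prod.snd))) = 0 := by
              rw [tsum_congr (fun j => by rw [hXAz i j (Or.inl hi), mul_zero])]
              exact tsum_zero
            rw [hz, mul_zero]
          · intro μ hμ
            have hz : ∀ ν : 𝔞 × ℕ, (genTensors θ φ).C α μ ν *
                ((if g = 0 then (0:ℝ) else F (g-1) (μ :: ν :: t))
                 + ∑ g₁ ∈ Finset.range (g+1), ∑ s : Finset (Fin t.length),
                     F g₁ (μ :: selectIdx t s) * F (g-g₁) (ν :: selectIdx t sᶜ)) = 0 := by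
              intro ν
              rw [hXFz μ ν (Or.inl hμ), mul_zero]
            rw [tsum_congr hz]
            exact tsum_zero
          · intro μ
            exact tsum_nonneg fun ν => mul_nonneg (gC_nn _ _ _) (hXFnn μ ν)
          · intro i
            rw [← tsum_mul_left]
            apply StmtAux.tsum_comp aa _ _ M
            · intro j hj
              rw [hXAz i j (Or.inr hj), mul_zero, mul_zero]
            · intro ν hν
              rw [hXFz (aa, i) ν (Or.inr hν), mul_zero]
            · intro ν
              exact mul_nonneg (gC_nn _ _ _) (hXFnn (aa, i) ν)
            · intro j
              have hX : Qm ^ (e+1) *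
                  ((if g = 0 then (0:ℝ) else FAi (g-1) (i :: j :: t.map Prod.snd))
                   + ∑ g₁ ∈ Finset.range (g+1), ∑ s : Finset (Fin t.length),
                       FAi g₁ (i :: (selectIdx t s).map Prod.snd) *
                         FAi (g-g₁) (j :: (selectIdx t sᶜ).map Prod.snd))
                  ≤ ((if g = 0 then (0:ℝ) else F (g-1) ((aa, i) :: (aa, j) :: t))
                   + ∑ g₁ ∈ Finset.range (g+1), ∑ s : Finset (Fin t.length),
                       F g₁ ((aa, i) :: selectIdx t s) *
                         F (g-g₁) ((aa, j) :: selectIdx t sᶜ)) := by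
                rw [mul_add]
                apply add_le_add
                · split_ifs with hg
                  · simp
                  · have hdiag2 : ∀ x ∈ (aa, i) :: (aa, j) :: t, x.1 = aa := by
                      intro x hx
                      rcases List.mem_cons.mp hx with h | hx2
                      · rw [h]
                      rcases List.mem_cons.mp hx2 with h | h
                      · rw [h]
                      · exact hd x (List.mem_cons_of_mem _ h)
                    have hih := ih (g-1) ((aa, i) :: (aa, j) :: t) aa
                      (by simp only [List.length_cons]; omega) (by simp)
                      (by simp only [List.length_cons]; omega) hdiag2
                    simp only [List.map_cons, List.length_cons] at hih
                    rw [show 2*(g-1) + (t.length + 1 + 1) - 2 = e + 1 from by omega] at hih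
                    exact hih
                · rw [Finset.mul_sum]
                  apply Finset.sum_le_sum
                  intro g₁ hg₁
                  rw [Finset.mul_sum]
                  apply Finset.sum_le_sum
                  intro s _
                  have hg₁le : g₁ ≤ g := by
                    have := Finset.mem_range.mp hg₁; omega
                  have hc1 : (selectIdx t s).length = s.card := StmtAux.length_selectIdx t s
                  have hc2 : (selectIdx t sᶜ).length = sᶜ.card := StmtAux.length_selectIdx t sᶜ
                  have hcc : s.card + sᶜ.card = t.length := by
                    rw [Finset.card_add_card_compl]; simp
                  by_cases e1 : g₁ = 0 ∧ s.card ≤ 1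
                  · rw [e1.1]
                    have z1 : FAi 0 (i :: (selectIdx t s).map Prod.snd) = 0 :=
                      StmtAux.small hFAi _ (by simp) (by simp only [List.length_cons, List.length_map, hc1]; omega)
                    have z2 : F 0 ((aa, i) :: selectIdx t s) = 0 :=
                      StmtAux.small hF _ (by simp) (by simp only [List.length_cons, hc1]; omega)
                    simp [z1, z2]
                  by_cases e2 : g - g₁ = 0 ∧ sᶜ.card ≤ 1
                  · rw [e2.1]
                    have z1 : FAi 0 (j :: (selectIdx t sᶜ).map Prod.snd) = 0 :=
                      StmtAux.small hFAi _ (by simp) (by simp only [List.length_cons, List.length_map, hc2]; omega)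
                    have z2 : F 0 ((aa, j) :: selectIdx t sᶜ) = 0 :=
                      StmtAux.small hF _ (by simp) (by simp only [List.length_cons, hc2]; omega)
                    simp [z1, z2]
                  have hdiag1 : ∀ x ∈ (aa, i) :: selectIdx t s, x.1 = aa := by
                    intro x hx
                    rcases List.mem_cons.mp hx with h | h
                    · rw [h]
                    · exact hd x (List.mem_cons_of_mem _ (StmtAux.mem_selectIdx h))
                  have hdiag2 : ∀ x ∈ (aa, j) :: selectIdx t sᶜ, x.1 = aa := by
                    intro x hx
                    rcases List.mem_cons.mp hx with h | h
                    · rw [h]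
                    · exact hd x (List.mem_cons_of_mem _ (StmtAux.mem_selectIdx h))
                  have ih₁ := ih g₁ ((aa, i) :: selectIdx t s) aa
                    (by simp only [List.length_cons, hc1]; omega) (by simp)
                    (by simp only [List.length_cons, hc1]; omega) hdiag1
                  have ih₂ := ih (g-g₁) ((aa, j) :: selectIdx t sᶜ) aa
                    (by simp only [List.length_cons, hc2]; omega) (by simp)
                    (by simp only [List.length_cons, hc2]; omega) hdiag2
                  simp only [List.map_cons, List.length_cons, hc1] at ih₁
                  simp only [List.map_cons, List.length_cons, hc2] at ih₂
                  calc Qm ^ (e+1) * (FAi g₁ (i :: (selectIdx t s).map Prod.snd) *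
                        FAi (g-g₁) (j :: (selectIdx t sᶜ).map Prod.snd))
                      = (Qm ^ (2*g₁ + (s.card + 1) - 2) *
                          FAi g₁ (i :: (selectIdx t s).map Prod.snd)) *
                        (Qm ^ (2*(g-g₁) + (sᶜ.card + 1) - 2) *
                          FAi (g-g₁) (j :: (selectIdx t sᶜ).map Prod.snd)) := by
                        rw [show e+1 = (2*g₁ + (s.card + 1) - 2) + (2*(g-g₁) + (sᶜ.card + 1) - 2)
                          from by omega, pow_add]
                        ring
                    _ ≤ F g₁ ((aa, i) :: selectIdx t s) * F (g-g₁) ((aa, j) :: selectIdx t sᶜ) := by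
                        apply mul_le_mul ih₁ ih₂
                        · exact mul_nonneg (pow_nonneg hQpos.le _) (Ann _ _ (by simp))
                        · exact Fnn _ _ (by simp)
              calc Qm ^ (e+2) * (AiryT.C α.2 i j *
                    ((if g = 0 then (0:ℝ) else FAi (g-1) (i :: j :: t.map Prod.snd))
                     + ∑ g₁ ∈ Finset.range (g+1), ∑ s : Finset (Fin t.length),
                         FAi g₁ (i :: (selectIdx t s).map Prod.snd) *
                           FAi (g-g₁) (j :: (selectIdx t sᶜ).map Prod.snd)))
                  = (Qm * AiryT.C α.2 i j) * (Qm ^ (e+1) *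
                    ((if g = 0 then (0:ℝ) else FAi (g-1) (i :: j :: t.map Prod.snd))
                     + ∑ g₁ ∈ Finset.range (g+1), ∑ s : Finset (Fin t.length),
                         FAi g₁ (i :: (selectIdx t s).map Prod.snd) *
                           FAi (g-g₁) (j :: (selectIdx t sᶜ).map Prod.snd))) := by ring
                _ ≤ (genTensors θ φ).C α (aa, i) (aa, j) *
                    ((if g = 0 then (0:ℝ) else F (g-1) ((aa, i) :: (aa, j) :: t))
                     + ∑ g₁ ∈ Finset.range (g+1), ∑ s : Finset (Fin t.length),
                         F g₁ ((aa, i) :: selectIdx t s) *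
                           F (g-g₁) ((aa, j) :: selectIdx t sᶜ)) := by
                    apply mul_le_mul (TC aa α i j hdα) hX
                    · exact mul_nonneg (pow_nonneg hQpos.le _) (hXAnn i j)
                    · exact gC_nn _ _ _
      · -- base cases
        have hcase : (g = 0 ∧ t.length = 2) ∨ (g = 1 ∧ t.length = 0) := by omega
        rcases hcase with ⟨hg, hl⟩ | ⟨hg, hl⟩
        · subst hg
          obtain ⟨y, z, rfl⟩ : ∃ y z, t = [y, z] := by
            rcases t with _ | ⟨y, _ | ⟨z, t'⟩⟩ <;> simp only [List.length_cons, List.length_nil] at hl <;> try omega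
            exact ⟨y, z, by rw [List.length_eq_zero_iff.mp (by omega : t'.length = 0)]⟩
          simp only [List.map_cons, List.map_nil]
          rw [hF.base_A α y z, hFAi.base_A α.2 y.2 z.2]
          have hdy : y.1 = aa := hd y (by simp)
          have hdz : z.1 = aa := hd z (by simp)
          simp only [genTensors, AiryT]
          by_cases hz : α.2 = 0 ∧ y.2 = 0 ∧ z.2 = 0
          · rw [if_pos hz, if_pos ⟨by rw [hdα, hdy], by rw [hdy, hdz], hz.1, hz.2.1, hz.2.2⟩]
            rw [hdα]
            simpa using hQle aa
          · rw [if_neg hz, mul_zero]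
            split_ifs with h
            · exact hθz _ _
            · exact le_rfl
        · subst hg
          rw [List.length_eq_zero_iff.mp hl]
          simp only [List.map_cons, List.map_nil, List.length_nil]
          rw [hF.base_D α, hFAi.base_D α.2]
          simp only [genTensors, AiryT]
          by_cases hz : α.2 = 1
          · rw [if_pos hz, if_pos hz, if_neg (by omega : ¬ α.2 = 0), hdα]
            simp only [zero_add]
            rw [show 2*1 + (0+1) - 2 = 1 from rfl, pow_one]
            have := hQle aa
            nlinarith
          · rw [if_neg hz, if_neg hz, mul_zero, add_zero]
            split_ifs with h
            · apply add_nonneg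
              · exact div_nonneg (mul_nonneg (hθz _ _) (hφpos _ _)) (by norm_num)
              · exact div_nonneg (hθz _ _) (by norm_num)
            · exact le_rfl
  -- conclusion
  intro g n hn h2 α
  by_cases hdiag : ∀ i j : Fin n, (α i).1 = (α j).1
  · rw [if_pos hdiag, one_mul]
    have hlen : (List.ofFn α).length = n := List.length_ofFn
    have hmap : (List.ofFn α).map Prod.snd = List.ofFn (fun i => (α i).2) := by
      rw [List.map_ofFn]; rfl
    have := main (2*g + n) g (List.ofFn α) (α ⟨0, hn⟩).1 (by rw [hlen]) (by rw [hlen]; omega)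
      (by rw [hlen]; exact h2) (by
        intro x hx
        obtain ⟨i, rfl⟩ := List.mem_ofFn.mp hx
        exact hdiag i ⟨0, hn⟩)
    rw [hlen, hmap] at this
    exact this
  · rw [if_neg hdiag, zero_mul, zero_mul]
    exact Fnn g (List.ofFn α) (by rw [List.length_ofFn]; exact hn)
end
end

section
/- Let 𝔞 be a nonempty finite set and suppose all θ_{(a,m)} and φ_{(a,m),(b,m')} are real and nonnegative, and that there exist M₋ > 0 and ρ₋ > 0 with θ_{(a,i)} ≥ M₋/ρ₋^{i+1} for all (a,i) ∈ 𝔄 (strong positivity). Then the amplitudes F_{g;α_1,…,α_n} are real and, for all integers g ≥ 0, n ≥ 1 with 2g−2+n > 0 and α_i = (a_i,k_i) ∈ 𝔄, satisfy F_{g;α_1,…,α_n} ≥ δ_{a_1,…,a_n} · (2M₋)^{2g−2+n} · F^PI_{g;k_1,…,k_n}(ρ₋/3), where δ_{a_1,…,a_n} equals 1 if a_1 = ⋯ = a_n and 0 otherwise. -/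
open scoped BigOperators

noncomputable section

section Aux

open List Finset

lemma filtlen (n : ℕ) (s : Finset (Fin n)) :
    ((List.finRange n).filter (fun i => decide (i ∈ s))).length = s.card := by
  have h : ((List.finRange n).filter (fun i => decide (i ∈ s))).length
      = (Finset.univ.filter (fun i => i ∈ s)).card := rfl
  rw [h]; simp

lemma selectIdx_length {ι : Type*} (l : List ι) (s : Finset (Fin l.length)) :
    (selectIdx l s).length = s.card := by
  simp [selectIdx, filtlen]

lemma selectIdx_mem {ι : Type*} (l : List ι) (s : Finset (Fin l.length))
    {x : ι} (hx : x ∈ selectIdx l s) : x ∈ l := by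
  simp only [selectIdx, List.mem_map, List.mem_filter] at hx
  obtain ⟨i, _, rfl⟩ := hx
  exact l.get_mem i

lemma finRange_cast (n m : ℕ) (h : n = m) :
    List.finRange m = (List.finRange n).map (Fin.cast h) := by
  subst h; simp [List.map_id'']

lemma compl_map_equiv {n m : ℕ} (e : Fin n ≃ Fin m) (s : Finset (Fin n)) :
    (s.map e.toEmbedding)ᶜ = sᶜ.map e.toEmbedding := by
  ext x; simp [Finset.mem_map_equiv]

lemma selectIdx_map {ι κ : Type*} (f : ι → κ) (l : List ι) (s : Finset (Fin l.length)) :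
    selectIdx (l.map f) (s.map (finCongr (l.length_map f).symm).toEmbedding)
      = (selectIdx l s).map f := by
  unfold selectIdx
  rw [finRange_cast l.length (l.map f).length (l.length_map f).symm, List.filter_map,
    List.map_map, List.map_map]
  have h1 : ((fun i => decide (i ∈ s.map (finCongr (l.length_map f).symm).toEmbedding))
      ∘ Fin.cast (l.length_map f).symm) = (fun i : Fin l.length => decide (i ∈ s)) := by
    funext i
    simp only [Function.comp_apply, decide_eq_decide, Finset.mem_map_equiv]
    constructor
    · intro hx; convert hx using 1; rfl
    · intro hx; convert hx using 1; rfl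
  have h2 : ((l.map f).get ∘ Fin.cast (l.length_map f).symm) = (f ∘ l.get) := by
    funext i
    simp only [Function.comp_apply, List.get_eq_getElem, List.getElem_map]
    congr 1
  rw [h1, h2]

lemma eraseIdx_map' {α β : Type*} (f : α → β) (l : List α) (i : ℕ) :
    (l.map f).eraseIdx i = (l.eraseIdx i).map f := by
  induction l generalizing i with
  | nil => simp
  | cons a l ih => cases i <;> simp [List.eraseIdx, ih]

lemma mem_eraseIdx' {α : Type*} (l : List α) (i : ℕ) {x : α}
    (hx : x ∈ l.eraseIdx i) : x ∈ l := by
  induction l generalizing i with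
  | nil => simp at hx
  | cons a l ih =>
    cases i with
    | zero => exact List.mem_cons_of_mem _ hx
    | succ i =>
      rcases List.mem_cons.mp hx with h | h
      · exact h ▸ List.mem_cons_self
      · exact List.mem_cons_of_mem _ (ih i h)

variable {ι : Type*} {deg : ι → ℕ} {T : AiryTensors ℝ ι} {F : ℕ → List ι → ℝ}

/-- Amplitudes with `2g - 2 + n ≤ 0` vanish. -/
lemma Fsmall_zero (hF : IsAmplitudes deg T F) (g : ℕ) (l : List ι)
    (h1 : 1 ≤ l.length) (h2 : 2 * g + l.length ≤ 2) : F g l = 0 := by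
  have hg : g = 0 := by omega
  subst hg
  have h12 : l.length = 1 ∨ l.length = 2 := by omega
  rcases h12 with h | h
  · obtain ⟨x, rfl⟩ := List.length_eq_one_iff.mp h
    exact hF.zero_one x
  · obtain ⟨x, y, rfl⟩ := List.length_eq_two.mp h
    exact hF.zero_two x y

/-- Vanishing when the head degree is large. -/
lemma Fhead_zero (hF : IsAmplitudes deg T F) (g : ℕ) (μ : ι) (rest : List ι)
    (hdeg : 3 * g + rest.length + 1 ≤ deg μ) : F g (μ :: rest) = 0 := by
  by_cases h : 2 * g + (rest.length + 1) ≤ 2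
  · exact Fsmall_zero hF g _ (by simp) (by simpa using h)
  · refine hF.vanish g (μ :: rest) (by simp) (by simp; omega) ?_
    simp only [List.map_cons, List.sum_cons, List.length_cons]
    omega

end Aux
section Aux2

variable {ι : Type*} {deg : ι → ℕ} {T : AiryTensors ℝ ι} {F : ℕ → List ι → ℝ}

lemma card_compl_fin {n : ℕ} (s : Finset (Fin n)) : sᶜ.card = n - s.card := by
  rw [Finset.card_compl, Fintype.card_fin]

lemma card_le_fin {n : ℕ} (s : Finset (Fin n)) : s.card ≤ n := by
  simpa using Finset.card_le_univ s

/-- Nonnegativity of amplitudes of a quantum Airy structure with nonnegative tensors. -/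
lemma amp_nonneg (hF : IsAmplitudes deg T F)
    (hA : ∀ a b c, 0 ≤ T.A a b c) (hB : ∀ a b c, 0 ≤ T.B a b c)
    (hC : ∀ a b c, 0 ≤ T.C a b c) (hD : ∀ a, 0 ≤ T.D a) :
    ∀ g (l : List ι), 1 ≤ l.length → 0 ≤ F g l := by
  suffices h : ∀ N g (l : List ι), 2 * g + l.length ≤ N → 1 ≤ l.length → 0 ≤ F g l by
    intro g l hl; exact h (2 * g + l.length) g l le_rfl hl
  intro N
  induction N with
  | zero => intro g l hN hl; omega
  | succ N IH =>
    intro g l hN hl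
    rcases lt_or_ge (2 * g + l.length) 4 with hlt | hge
    · -- small cases
      by_cases h2 : 2 * g + l.length ≤ 2
      · exact le_of_eq (Fsmall_zero hF g l hl h2).symm
      · -- 2*g + l.length = 3
        have h3 : (g = 0 ∧ l.length = 3) ∨ (g = 1 ∧ l.length = 1) := by omega
        rcases h3 with ⟨rfl, h3⟩ | ⟨rfl, h3⟩
        · obtain ⟨x, y, z, rfl⟩ := List.length_eq_three.mp h3
          rw [hF.base_A]; exact hA x y z
        · obtain ⟨x, rfl⟩ := List.length_eq_one_iff.mp h3
          rw [hF.base_D]; exact hD x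
    · -- recursion
      obtain ⟨x, l', rfl⟩ : ∃ x l', l = x :: l' := by
        cases l with
        | nil => simp at hl
        | cons x l' => exact ⟨x, l', rfl⟩
      simp only [List.length_cons] at hN hge
      rw [hF.recur g x l' (by omega)]
      have hn' := l'.length
      apply add_nonneg
      · apply Finset.sum_nonneg
        intro m _
        apply tsum_nonneg
        intro μ
        refine mul_nonneg (hB _ _ _) (IH g (μ :: l'.eraseIdx m.1) ?_ (by simp))
        have hm : m.1 < l'.length := m.2
        have he : (l'.eraseIdx m.1).length = l'.length - 1 := by
          rw [List.length_eraseIdx]; simp [hm]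
        simp only [List.length_cons, he]
        omega
      · apply mul_nonneg (by norm_num)
        apply tsum_nonneg; intro μ
        apply tsum_nonneg; intro ν
        refine mul_nonneg (hC _ _ _) (add_nonneg ?_ ?_)
        · split
          · exact le_rfl
          · next hg0 =>
            refine IH (g - 1) (μ :: ν :: l') ?_ (by simp)
            simp only [List.length_cons]
            omega
        · apply Finset.sum_nonneg
          intro g₁ hg₁
          rw [Finset.mem_range] at hg₁
          apply Finset.sum_nonneg
          intro s _
          have hcard : (selectIdx l' s).length = s.card := selectIdx_length l' s
          have hcardc : (selectIdx l' sᶜ).length = l'.length - s.card := by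
            rw [selectIdx_length, card_compl_fin]
          have hsle := card_le_fin s
          by_cases hs1 : 2 * g₁ + (s.card + 1) ≤ 2
          · rw [Fsmall_zero hF g₁ (μ :: selectIdx l' s) (by simp) (by simp [hcard]; omega)]
            simp
          · by_cases hs2 : 2 * (g - g₁) + (l'.length - s.card + 1) ≤ 2
            · rw [Fsmall_zero hF (g - g₁) (ν :: selectIdx l' sᶜ) (by simp)
                (by simp [hcardc]; omega)]
              simp
            · refine mul_nonneg (IH g₁ _ ?_ (by simp)) (IH (g - g₁) _ ?_ (by simp))
              · simp only [List.length_cons, hcard]; omega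
              · simp only [List.length_cons, hcardc]; omega

end Aux2
section Aux3

lemma dfac_pos (n : ℕ) : (0:ℝ) < (Nat.doubleFactorial n : ℝ) := by
  exact_mod_cast Nat.doubleFactorial_pos n

lemma dfac_nonneg (n : ℕ) : (0:ℝ) ≤ (Nat.doubleFactorial n : ℝ) := (dfac_pos n).le

lemma dfac_ne (n : ℕ) : (Nat.doubleFactorial n : ℝ) ≠ 0 := (dfac_pos n).ne'

lemma PIA_nonneg {u : ℝ} (hu : 0 < u) : ∀ i j k, 0 ≤ (PITensors u).A i j k := by
  intro i j k; simp only [PITensors]; split <;> positivity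

lemma PIB_nonneg {u : ℝ} (hu : 0 < u) : ∀ i j k, 0 ≤ (PITensors u).B i j k := by
  intro i j k; simp only [PITensors]; split <;> positivity

lemma PIC_nonneg {u : ℝ} (hu : 0 < u) : ∀ i j k, 0 ≤ (PITensors u).C i j k := by
  intro i j k; simp only [PITensors]; split <;> positivity

lemma PID_nonneg {u : ℝ} (hu : 0 < u) : ∀ i, 0 ≤ (PITensors u).D i := by
  intro i; simp only [PITensors]
  apply add_nonneg <;> (split <;> positivity)

section Gen
variable {𝔞 : Type*} [DecidableEq 𝔞] (θ : 𝔞 → ℤ → ℝ) (φ : 𝔞 × ℕ → 𝔞 × ℕ → ℝ)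
  (hθneg : ∀ (a : 𝔞) (m : ℤ), m < 0 → θ a m = 0)
  (hθpos : ∀ (a : 𝔞) (m : ℕ), 0 ≤ θ a (m : ℤ))
  (hφpos : ∀ α β, 0 ≤ φ α β)

include hθneg hθpos in
lemma thetann : ∀ (a : 𝔞) (m : ℤ), 0 ≤ θ a m := by
  intro a m
  rcases lt_or_ge m 0 with h | h
  · rw [hθneg a m h]
  · obtain ⟨n, rfl⟩ := Int.eq_ofNat_of_zero_le h
    exact hθpos a n

include hθneg hθpos hφpos in
lemma genA_nonneg : ∀ a b c, 0 ≤ (genTensors θ φ).A a b c := by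
  intro a b c; simp only [genTensors]
  have := thetann θ hθneg hθpos
  split
  · exact this _ _
  · exact le_rfl

include hθneg hθpos hφpos in
lemma genB_nonneg : ∀ a b c, 0 ≤ (genTensors θ φ).B a b c := by
  intro a b c; simp only [genTensors]
  have h1 := thetann θ hθneg hθpos
  apply add_nonneg <;> split
  · apply div_nonneg (mul_nonneg (h1 _ _) (dfac_nonneg _))
      (mul_nonneg (dfac_nonneg _) (dfac_nonneg _))
  · exact le_rfl
  · exact mul_nonneg (mul_nonneg (h1 _ _) (hφpos _ _)) (dfac_nonneg _)
  · exact le_rfl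

include hθneg hθpos hφpos in
lemma genC_nonneg : ∀ a b c, 0 ≤ (genTensors θ φ).C a b c := by
  intro a b c; simp only [genTensors]
  have h1 := thetann θ hθneg hθpos
  have hsum : ∀ (x : 𝔞) (n : ℕ) (b' : 𝔞 × ℕ) (r : ℕ),
      0 ≤ ∑ m ∈ Finset.range r, θ x (m : ℤ) * φ (x, n - m) b' := by
    intro x n b' r
    exact Finset.sum_nonneg fun m _ => mul_nonneg (hθpos _ _) (hφpos _ _)
  apply add_nonneg
  apply add_nonneg
  apply add_nonneg
  · split
    · apply div_nonneg (mul_nonneg (h1 _ _) (mul_nonneg (dfac_nonneg _) (dfac_nonneg _)))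
        (dfac_nonneg _)
    · exact le_rfl
  · split
    · apply div_nonneg (mul_nonneg (hsum _ _ _ _) (mul_nonneg (dfac_nonneg _) (dfac_nonneg _)))
        (dfac_nonneg _)
    · exact le_rfl
  · split
    · apply div_nonneg (mul_nonneg (hsum _ _ _ _) (mul_nonneg (dfac_nonneg _) (dfac_nonneg _)))
        (dfac_nonneg _)
    · exact le_rfl
  · split
    · exact mul_nonneg (mul_nonneg (mul_nonneg (h1 _ _) (hφpos _ _)) (hφpos _ _))
        (mul_nonneg (dfac_nonneg _) (dfac_nonneg _))
    · exact le_rfl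

include hθneg hθpos hφpos in
lemma genD_nonneg : ∀ a, 0 ≤ (genTensors θ φ).D a := by
  intro a; simp only [genTensors]
  have h1 := thetann θ hθneg hθpos
  apply add_nonneg <;> split
  · apply add_nonneg
    · apply div_nonneg (mul_nonneg (h1 _ _) (hφpos _ _)) (by norm_num)
    · apply div_nonneg (h1 _ _) (by norm_num)
  · exact le_rfl
  · apply div_nonneg (h1 _ _) (by norm_num)
  · exact le_rfl

end Gen
end Aux3
section Aux4
variable {𝔞 : Type*} [DecidableEq 𝔞] (θ : 𝔞 → ℤ → ℝ) (φ : 𝔞 × ℕ → 𝔞 × ℕ → ℝ)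
  (hθneg : ∀ (a : 𝔞) (m : ℤ), m < 0 → θ a m = 0)
  (hθpos : ∀ (a : 𝔞) (m : ℕ), 0 ≤ θ a (m : ℤ))
  (hφpos : ∀ α β, 0 ≤ φ α β)
  (Mm ρm : ℝ) (hMm : 0 < Mm) (hρm : 0 < ρm)
  (hstrong : ∀ (a : 𝔞) (i : ℕ), Mm / ρm ^ (i + 1) ≤ θ a (i : ℤ))

lemma genB_diag (a : 𝔞) (i j k : ℕ) :
    (genTensors θ φ).B (a,i) (a,j) (a,k)
      = θ a ((k:ℤ) - i - j + 1) * (Nat.doubleFactorial (2*k+1) : ℝ)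
          / ((Nat.doubleFactorial (2*i+1) : ℝ) * (Nat.doubleFactorial (2*j-1) : ℝ))
        + (if i = 0 ∧ j = 0 then
            θ a 0 * φ (a, 0) (a,k) * (Nat.doubleFactorial (2*k-1) : ℝ) else 0) := by
  simp [genTensors]

include hθneg hθpos hφpos hMm hρm hstrong in
lemma IB (a : 𝔞) (i j k : ℕ) :
    2 * Mm * (PITensors (ρm/3)).B i j k ≤ (genTensors θ φ).B (a,i) (a,j) (a,k) := by
  have h3u : 3 * (ρm/3) = ρm := by ring
  rw [genB_diag]
  have hsnd : (0:ℝ) ≤ (if i = 0 ∧ j = 0 then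
      θ a 0 * φ (a, 0) (a,k) * (Nat.doubleFactorial (2*k-1) : ℝ) else 0) := by
    split
    · exact mul_nonneg (mul_nonneg (hθpos a 0) (hφpos _ _)) (dfac_nonneg _)
    · exact le_rfl
  simp only [PITensors, h3u]
  by_cases hcase : i + j ≤ k + 1
  · rw [if_pos hcase]
    refine le_add_of_le_of_nonneg ?_ hsnd
    have harg : ((k:ℤ) - i - j + 1) = ((k + 1 - (i+j) : ℕ) : ℤ) := by push_cast; omega
    rw [harg]
    have hee : (k + 1 - (i+j)) + 1 = k + 2 - (i+j) := by omega
    have hθ := hstrong a (k + 1 - (i+j))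
    calc 2 * Mm * ((Nat.doubleFactorial (2*k+1) : ℝ)
          / (2 * ρm ^ (k + 2 - (i + j)) * (Nat.doubleFactorial (2*i+1) : ℝ)
              * (Nat.doubleFactorial (2*j-1) : ℝ)))
        = (Mm / ρm ^ ((k + 1 - (i+j)) + 1)) * ((Nat.doubleFactorial (2*k+1) : ℝ)
            / ((Nat.doubleFactorial (2*i+1) : ℝ) * (Nat.doubleFactorial (2*j-1) : ℝ))) := by
          rw [hee]
          have h1 : ρm ^ (k + 2 - (i + j)) ≠ 0 := by positivity
          field_simp
      _ ≤ θ a ((k + 1 - (i+j) : ℕ) : ℤ) * ((Nat.doubleFactorial (2*k+1) : ℝ)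
            / ((Nat.doubleFactorial (2*i+1) : ℝ) * (Nat.doubleFactorial (2*j-1) : ℝ))) := by
          apply mul_le_mul_of_nonneg_right hθ
          positivity
      _ = θ a ((k + 1 - (i+j) : ℕ) : ℤ) * (Nat.doubleFactorial (2*k+1) : ℝ)
            / ((Nat.doubleFactorial (2*i+1) : ℝ) * (Nat.doubleFactorial (2*j-1) : ℝ)) := by
          ring
  · rw [if_neg hcase, mul_zero]
    refine add_nonneg ?_ hsnd
    have harg : ((k:ℤ) - i - j + 1) < 0 := by push_cast; omega
    rw [hθneg a _ harg, zero_mul, zero_div]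

lemma genC_diag (a : 𝔞) (i j k : ℕ) :
    (genTensors θ φ).C (a,i) (a,j) (a,k)
      = θ a ((j:ℤ) + k - i + 2) * ((Nat.doubleFactorial (2*j+1) : ℝ) * (Nat.doubleFactorial (2*k+1) : ℝ))
          / (Nat.doubleFactorial (2*i+1) : ℝ)
        + ((∑ m ∈ Finset.range (j + 2 - i), θ a (m : ℤ) * φ (a, j + 1 - i - m) (a,k))
            * ((Nat.doubleFactorial (2*j+1) : ℝ) * (Nat.doubleFactorial (2*k-1) : ℝ))
            / (Nat.doubleFactorial (2*i+1) : ℝ)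
          + ((∑ m ∈ Finset.range (k + 2 - i), θ a (m : ℤ) * φ (a, k + 1 - i - m) (a,j))
              * ((Nat.doubleFactorial (2*j-1) : ℝ) * (Nat.doubleFactorial (2*k+1) : ℝ))
              / (Nat.doubleFactorial (2*i+1) : ℝ)
            + (if i = 0 then
                θ a 0 * φ (a, 0) (a,j) * φ (a, 0) (a,k)
                  * ((Nat.doubleFactorial (2*j-1) : ℝ) * (Nat.doubleFactorial (2*k-1) : ℝ))
              else 0))) := by
  simp [genTensors, add_assoc]

include hθneg hθpos hφpos hMm hρm hstrong in
lemma IC (a : 𝔞) (i j k : ℕ) :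
    2 * Mm * (PITensors (ρm/3)).C i j k ≤ (genTensors θ φ).C (a,i) (a,j) (a,k) := by
  have h3u : 3 * (ρm/3) = ρm := by ring
  rw [genC_diag]
  have hsum : ∀ (n r : ℕ) (b' : 𝔞 × ℕ),
      0 ≤ ∑ m ∈ Finset.range r, θ a (m : ℤ) * φ (a, n - m) b' :=
    fun n r b' => Finset.sum_nonneg fun m _ => mul_nonneg (hθpos _ _) (hφpos _ _)
  have hsnd : (0:ℝ) ≤ (∑ m ∈ Finset.range (j + 2 - i), θ a (m : ℤ) * φ (a, j + 1 - i - m) (a,k))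
            * ((Nat.doubleFactorial (2*j+1) : ℝ) * (Nat.doubleFactorial (2*k-1) : ℝ))
            / (Nat.doubleFactorial (2*i+1) : ℝ)
          + ((∑ m ∈ Finset.range (k + 2 - i), θ a (m : ℤ) * φ (a, k + 1 - i - m) (a,j))
              * ((Nat.doubleFactorial (2*j-1) : ℝ) * (Nat.doubleFactorial (2*k+1) : ℝ))
              / (Nat.doubleFactorial (2*i+1) : ℝ)
            + (if i = 0 then
                θ a 0 * φ (a, 0) (a,j) * φ (a, 0) (a,k)
                  * ((Nat.doubleFactorial (2*j-1) : ℝ) * (Nat.doubleFactorial (2*k-1) : ℝ))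
              else 0)) := by
    apply add_nonneg
    · apply div_nonneg (mul_nonneg (hsum _ _ _) (mul_nonneg (dfac_nonneg _) (dfac_nonneg _)))
        (dfac_nonneg _)
    apply add_nonneg
    · apply div_nonneg (mul_nonneg (hsum _ _ _) (mul_nonneg (dfac_nonneg _) (dfac_nonneg _)))
        (dfac_nonneg _)
    · split
      · exact mul_nonneg (mul_nonneg (mul_nonneg (hθpos a 0) (hφpos _ _)) (hφpos _ _))
          (mul_nonneg (dfac_nonneg _) (dfac_nonneg _))
      · exact le_rfl
  simp only [PITensors, h3u]
  by_cases hcase : i ≤ j + k + 2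
  · rw [if_pos hcase]
    refine le_add_of_le_of_nonneg ?_ hsnd
    have harg : ((j:ℤ) + k - i + 2) = ((j + k + 2 - i : ℕ) : ℤ) := by push_cast; omega
    rw [harg]
    have hee : (j + k + 2 - i) + 1 = j + k + 3 - i := by omega
    have hθ := hstrong a (j + k + 2 - i)
    calc 2 * Mm * (((Nat.doubleFactorial (2*j+1) : ℝ) * (Nat.doubleFactorial (2*k+1) : ℝ))
          / (2 * ρm ^ (j + k + 3 - i) * (Nat.doubleFactorial (2*i+1) : ℝ)))
        = (Mm / ρm ^ ((j + k + 2 - i) + 1)) * (((Nat.doubleFactorial (2*j+1) : ℝ)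
            * (Nat.doubleFactorial (2*k+1) : ℝ)) / (Nat.doubleFactorial (2*i+1) : ℝ)) := by
          rw [hee]
          have h1 : ρm ^ (j + k + 3 - i) ≠ 0 := by positivity
          field_simp
      _ ≤ θ a ((j + k + 2 - i : ℕ) : ℤ) * (((Nat.doubleFactorial (2*j+1) : ℝ)
            * (Nat.doubleFactorial (2*k+1) : ℝ)) / (Nat.doubleFactorial (2*i+1) : ℝ)) := by
          apply mul_le_mul_of_nonneg_right hθ
          positivity
      _ = θ a ((j + k + 2 - i : ℕ) : ℤ) * ((Nat.doubleFactorial (2*j+1) : ℝ)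
            * (Nat.doubleFactorial (2*k+1) : ℝ)) / (Nat.doubleFactorial (2*i+1) : ℝ) := by
          ring
  · rw [if_neg hcase, mul_zero]
    refine add_nonneg ?_ hsnd
    have harg : ((j:ℤ) + k - i + 2) < 0 := by push_cast; omega
    rw [hθneg a _ harg, zero_mul, zero_div]

include hθneg hθpos hφpos hMm hρm hstrong in
lemma ID (a : 𝔞) (i : ℕ) :
    2 * Mm * (PITensors (ρm/3)).D i ≤ (genTensors θ φ).D (a,i) := by
  have h3u : 3 * (ρm/3) = ρm := by ring
  match i with
  | 0 =>
    have hPI : (PITensors (ρm/3)).D 0 = 1 / (16 * ρm^2) := by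
      have hρ : ρm ≠ 0 := ne_of_gt hρm
      simp [PITensors]; field_simp
    have hgen : (genTensors θ φ).D (a, 0)
        = θ a 0 * φ (a, 0) (a, 0) / 2 + θ a 1 / 8 := by
      simp [genTensors]
    rw [hPI, hgen]
    have key : 2 * Mm * (1 / (16 * ρm ^ 2)) = (Mm / ρm ^ (1+1)) / 8 := by
      have : ρm ^ 2 ≠ 0 := by positivity
      field_simp
      ring
    rw [key]
    have h1 := hstrong a 1
    have h0 : 0 ≤ θ a 0 * φ (a,0) (a,0) / 2 :=
      div_nonneg (mul_nonneg (hθpos a 0) (hφpos _ _)) (by norm_num)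
    push_cast at h1
    linarith
  | 1 =>
    have hPI : (PITensors (ρm/3)).D 1 = 1 / (48 * ρm) := by
      have hρ : ρm ≠ 0 := ne_of_gt hρm
      simp [PITensors]; field_simp
    have hgen : (genTensors θ φ).D (a, 1) = θ a 0 / 24 := by
      simp [genTensors]
    rw [hPI, hgen]
    have key : 2 * Mm * (1 / (48 * ρm)) = (Mm / ρm ^ (0+1)) / 24 := by
      field_simp
      ring
    rw [key]
    have h0 := hstrong a 0
    push_cast at h0
    linarith
  | (n+2) =>
    have hPI : (PITensors (ρm/3)).D (n+2) = 0 := by simp [PITensors]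
    have hgen : (genTensors θ φ).D (a, n+2) = 0 := by simp [genTensors]
    rw [hPI, hgen, mul_zero]

end Aux4
section Aux5

lemma cmp_tsum {𝔞 : Type*} [Fintype 𝔞] (a : 𝔞) (f : 𝔞 × ℕ → ℝ) (p : ℕ → ℝ) (N : ℕ)
    (hf0 : ∀ μ, 0 ≤ f μ) (hp0 : ∀ k, 0 ≤ p k) (hle : ∀ k, p k ≤ f (a, k))
    (hsupp : ∀ μ : 𝔞 × ℕ, N ≤ μ.2 → f μ = 0) :
    ∑' k, p k ≤ ∑' μ, f μ := by
  have hinj : Function.Injective (fun k : ℕ => (a, k)) := by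
    intro x y h; simpa using h
  have hfs : Summable f := by
    apply summable_of_ne_finset_zero (s := Finset.univ ×ˢ Finset.range N)
    intro μ hμ
    apply hsupp
    simp only [Finset.mem_product, Finset.mem_univ, Finset.mem_range, true_and, not_lt] at hμ
    exact hμ
  have hps : Summable p :=
    Summable.of_nonneg_of_le hp0 hle (hfs.comp_injective hinj)
  exact Summable.tsum_le_tsum_of_inj _ hinj (fun c _ => hf0 c) hle hps hfs

variable {𝔞 : Type*} {F : ℕ → List (𝔞 × ℕ) → ℝ} [DecidableEq 𝔞]
  {T : AiryTensors ℝ (𝔞 × ℕ)}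

/-- The inner bracket of the recursion vanishes when the first degree is large. -/
lemma Wzero_left (hF : IsAmplitudes Prod.snd T F) (g : ℕ) (l' : List (𝔞 × ℕ))
    (μ ν : 𝔞 × ℕ) (hge : 3 ≤ 2 * g + (l'.length + 1)) (hμ : 3 * g + l'.length + 2 ≤ μ.2) :
    ((if g = 0 then 0 else F (g-1) (μ :: ν :: l'))
      + ∑ g₁ ∈ Finset.range (g+1), ∑ s : Finset (Fin l'.length),
          F g₁ (μ :: selectIdx l' s) * F (g - g₁) (ν :: selectIdx l' sᶜ)) = 0 := by
  have h1 : (if g = 0 then (0:ℝ) else F (g-1) (μ :: ν :: l')) = 0 := by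
    split
    · rfl
    · next hg0 =>
      apply Fhead_zero hF
      simp only [List.length_cons]
      omega
  rw [h1, zero_add]
  apply Finset.sum_eq_zero
  intro g₁ hg₁
  rw [Finset.mem_range] at hg₁
  apply Finset.sum_eq_zero
  intro s _
  have hcard : (selectIdx l' s).length = s.card := selectIdx_length l' s
  have hsle := card_le_fin s
  have hz : F g₁ (μ :: selectIdx l' s) = 0 := by
    by_cases hs1 : 2 * g₁ + (s.card + 1) ≤ 2
    · exact Fsmall_zero hF g₁ _ (by simp) (by simp [hcard]; omega)
    · exact Fhead_zero hF g₁ _ _ (by simp only [hcard]; omega)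
  rw [hz, zero_mul]

/-- The inner bracket of the recursion vanishes when the second degree is large. -/
lemma Wzero_right (hF : IsAmplitudes Prod.snd T F) (g : ℕ) (l' : List (𝔞 × ℕ))
    (μ ν : 𝔞 × ℕ) (hge : 3 ≤ 2 * g + (l'.length + 1)) (hν : 3 * g + l'.length + 2 ≤ ν.2) :
    ((if g = 0 then 0 else F (g-1) (μ :: ν :: l'))
      + ∑ g₁ ∈ Finset.range (g+1), ∑ s : Finset (Fin l'.length),
          F g₁ (μ :: selectIdx l' s) * F (g - g₁) (ν :: selectIdx l' sᶜ)) = 0 := by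
  have h1 : (if g = 0 then (0:ℝ) else F (g-1) (μ :: ν :: l')) = 0 := by
    split
    · rfl
    · next hg0 =>
      by_cases hs : 2 * (g-1) + (l'.length + 2) ≤ 2
      · exact Fsmall_zero hF _ _ (by simp) (by simp only [List.length_cons]; omega)
      · refine hF.vanish (g-1) (μ :: ν :: l') (by simp)
          (by simp only [List.length_cons]; omega) ?_
        simp only [List.map_cons, List.sum_cons, List.length_cons]
        omega
  rw [h1, zero_add]
  apply Finset.sum_eq_zero
  intro g₁ hg₁
  rw [Finset.mem_range] at hg₁
  apply Finset.sum_eq_zero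
  intro s _
  have hcard : (selectIdx l' sᶜ).length = l'.length - s.card := by
    rw [selectIdx_length, card_compl_fin]
  have hsle := card_le_fin s
  have hz : F (g - g₁) (ν :: selectIdx l' sᶜ) = 0 := by
    by_cases hs1 : 2 * (g - g₁) + (l'.length - s.card + 1) ≤ 2
    · exact Fsmall_zero hF (g - g₁) _ (by simp) (by simp [hcard]; omega)
    · exact Fhead_zero hF (g - g₁) _ _ (by simp only [hcard]; omega)
  rw [hz, mul_zero]

end Aux5
section Aux6

lemma get_map_cast {α β : Type*} (f : α → β) (l : List α) (m : Fin l.length) :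
    (l.map f).get (finCongr (l.length_map f).symm m) = f (l.get m) := by
  simp only [List.get_eq_getElem, List.getElem_map]
  congr 1

lemma coe_finCongr {n m : ℕ} (h : n = m) (i : Fin n) : ((finCongr h i : Fin m) : ℕ) = i.1 := rfl

/-- Nonnegativity of the inner bracket of the recursion. -/
lemma Wexpr_nonneg {ι : Type*} {F : ℕ → List ι → ℝ}
    (hFnn : ∀ g l, 1 ≤ l.length → 0 ≤ F g l) (g : ℕ) (l' : List ι) (μ ν : ι) :
    0 ≤ (if g = 0 then (0:ℝ) else F (g-1) (μ :: ν :: l'))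
      + ∑ g₁ ∈ Finset.range (g+1), ∑ s : Finset (Fin l'.length),
          F g₁ (μ :: selectIdx l' s) * F (g - g₁) (ν :: selectIdx l' sᶜ) := by
  apply add_nonneg
  · split
    · exact le_rfl
    · exact hFnn _ _ (by simp)
  · refine Finset.sum_nonneg fun g₁ _ => Finset.sum_nonneg fun s _ =>
      mul_nonneg (hFnn _ _ (by simp)) (hFnn _ _ (by simp))

end Aux6

section Main
variable {𝔞 : Type*} [Fintype 𝔞] [DecidableEq 𝔞]
  (θ : 𝔞 → ℤ → ℝ) (φ : 𝔞 × ℕ → 𝔞 × ℕ → ℝ)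
  (hθneg : ∀ (a : 𝔞) (m : ℤ), m < 0 → θ a m = 0)
  (hθpos : ∀ (a : 𝔞) (m : ℕ), 0 ≤ θ a (m : ℤ))
  (hφpos : ∀ α β, 0 ≤ φ α β)
  (Mm ρm : ℝ) (hMm : 0 < Mm) (hρm : 0 < ρm)
  (hstrong : ∀ (a : 𝔞) (i : ℕ), Mm / ρm ^ (i + 1) ≤ θ a (i : ℤ))
  (F : ℕ → List (𝔞 × ℕ) → ℝ) (hF : IsAmplitudes Prod.snd (genTensors θ φ) F)
  (FPI : ℕ → List ℕ → ℝ) (hFPI : IsAmplitudes id (PITensors (ρm / 3)) FPI)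

include hθneg hθpos hφpos hMm hρm hstrong hF hFPI in
lemma main_ineq :
    ∀ (N g : ℕ) (l : List (𝔞 × ℕ)) (a : 𝔞), 2 * g + l.length ≤ N → 1 ≤ l.length →
      2 < 2 * g + l.length → (∀ x ∈ l, x.1 = a) →
      (2 * Mm) ^ (2 * g + l.length - 2) * FPI g (l.map Prod.snd) ≤ F g l := by
  have hu : (0:ℝ) < ρm / 3 := by positivity
  have hFnn : ∀ g l, 1 ≤ l.length → 0 ≤ F g l :=
    amp_nonneg hF (genA_nonneg θ φ hθneg hθpos hφpos) (genB_nonneg θ φ hθneg hθpos hφpos)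
      (genC_nonneg θ φ hθneg hθpos hφpos) (genD_nonneg θ φ hθneg hθpos hφpos)
  have hPnn : ∀ g l, 1 ≤ l.length → 0 ≤ FPI g l :=
    amp_nonneg hFPI (PIA_nonneg hu) (PIB_nonneg hu) (PIC_nonneg hu) (PID_nonneg hu)
  have hQ : (0:ℝ) < 2 * Mm := by positivity
  intro N
  induction N with
  | zero => intro g l a hN hl; omega
  | succ N IH =>
    intro g l a hN hl1 hl2 hdiag
    rcases lt_or_ge (2 * g + l.length) 4 with hlt | hge
    · -- base cases : 2*g + l.length = 3
      have h3 : (g = 0 ∧ l.length = 3) ∨ (g = 1 ∧ l.length = 1) := by omega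
      rcases h3 with ⟨rfl, h3⟩ | ⟨rfl, h3⟩
      · obtain ⟨x, y, z, rfl⟩ := List.length_eq_three.mp h3
        have hx : x.1 = a := hdiag x (by simp)
        have hy : y.1 = a := hdiag y (by simp)
        have hz : z.1 = a := hdiag z (by simp)
        have hxe : x = (a, x.2) := by rw [← hx]
        have hye : y = (a, y.2) := by rw [← hy]
        have hze : z = (a, z.2) := by rw [← hz]
        rw [hF.base_A, List.map_cons, List.map_cons, List.map_cons, List.map_nil,
          hFPI.base_A]
        have hgenA : (genTensors θ φ).A x y z
            = if x.2 = 0 ∧ y.2 = 0 ∧ z.2 = 0 then θ a 0 else 0 := by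
          rw [hxe, hye, hze]
          simp [genTensors]
        rw [hgenA]
        have hexp : 2 * 0 + [x, y, z].length - 2 = 1 := by simp
        rw [hexp, pow_one]
        simp only [PITensors]
        by_cases hc : x.2 = 0 ∧ y.2 = 0 ∧ z.2 = 0
        · rw [if_pos hc, if_pos hc]
          have key : (2 * Mm) * (1 / (6 * (ρm / 3))) = Mm / ρm ^ (0+1) := by
            have : ρm ≠ 0 := ne_of_gt hρm
            field_simp
            ring
          rw [key]
          exact hstrong a 0
        · rw [if_neg hc, if_neg hc, mul_zero]
      · obtain ⟨x, rfl⟩ := List.length_eq_one_iff.mp h3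
        have hx : x.1 = a := hdiag x (by simp)
        have hxe : x = (a, x.2) := by rw [← hx]
        rw [hF.base_D, List.map_cons, List.map_nil, hFPI.base_D]
        simp only [List.length_cons, List.length_nil]
        rw [show 2 * 1 + (0 + 1) - 2 = 1 by norm_num, pow_one, hxe]
        exact ID θ φ hθneg hθpos hφpos Mm ρm hMm hρm hstrong a x.2
    · -- recursion
      obtain ⟨x, l', rfl⟩ : ∃ x l', l = x :: l' := by
        cases l with
        | nil => simp at hl1
        | cons x l' => exact ⟨x, l', rfl⟩
      simp only [List.length_cons] at hN hl2 hge ⊢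
      have hx : x.1 = a := hdiag x (by simp)
      have hxe : x = (a, x.2) := by rw [← hx]
      have hl' : ∀ y ∈ l', y.1 = a := fun y hy => hdiag y (List.mem_cons_of_mem _ hy)
      have hlen : (l'.map Prod.snd).length = l'.length := l'.length_map Prod.snd
      set χ : ℕ := 2 * g + l'.length - 1 with hχ
      have hχ1 : 1 ≤ χ := by omega
      have hexp : 2 * g + (l'.length + 1) - 2 = χ := by omega
      have hQsplit : (2 * Mm) ^ χ = (2 * Mm) * (2 * Mm) ^ (χ - 1) := by
        conv_lhs => rw [show χ = (χ - 1) + 1 by omega]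
        rw [pow_succ]
        ring
      rw [hexp]
      rw [hF.recur g x l' (by omega), List.map_cons,
        hFPI.recur g x.2 (l'.map Prod.snd) (by rw [hlen]; omega)]
      rw [mul_add]
      -- the inner bracket comparison
      have Wcmp : ∀ j k : ℕ,
          (2 * Mm) ^ (χ - 1) *
            ((if g = 0 then 0 else FPI (g-1) (j :: k :: l'.map Prod.snd))
              + ∑ g₁ ∈ Finset.range (g+1), ∑ s : Finset (Fin (l'.map Prod.snd).length),
                  FPI g₁ (j :: selectIdx (l'.map Prod.snd) s)
                    * FPI (g - g₁) (k :: selectIdx (l'.map Prod.snd) sᶜ))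
          ≤ ((if g = 0 then 0 else F (g-1) ((a,j) :: (a,k) :: l'))
              + ∑ g₁ ∈ Finset.range (g+1), ∑ s : Finset (Fin l'.length),
                  F g₁ ((a,j) :: selectIdx l' s) * F (g - g₁) ((a,k) :: selectIdx l' sᶜ)) := by
        intro j k
        rw [mul_add]
        apply add_le_add
        · -- the F_{g-1} term
          by_cases hg0 : g = 0
          · simp [hg0]
          · rw [if_neg hg0, if_neg hg0]
            have hIH := IH (g-1) ((a,j) :: (a,k) :: l') a (by simp only [List.length_cons]; omega)
              (by simp) (by simp only [List.length_cons]; omega)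
              (by
                intro y hy
                rcases List.mem_cons.mp hy with rfl | hy
                · rfl
                rcases List.mem_cons.mp hy with rfl | hy
                · rfl
                · exact hl' y hy)
            have hexp2 : 2 * (g-1) + ((a,j) :: (a,k) :: l').length - 2 = χ - 1 := by
              simp only [List.length_cons]; omega
            rw [hexp2] at hIH
            simpa using hIH
        · -- the product terms
          rw [Finset.mul_sum]
          apply Finset.sum_le_sum
          intro g₁ hg₁
          rw [Finset.mem_range] at hg₁
          rw [Finset.mul_sum]
          rw [← Fintype.sum_equiv (Equiv.finsetCongr (finCongr hlen.symm))
            (fun s : Finset (Fin l'.length) => (2 * Mm) ^ (χ - 1) *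
              (FPI g₁ (j :: selectIdx (l'.map Prod.snd) (Equiv.finsetCongr (finCongr hlen.symm) s))
                * FPI (g - g₁) (k :: selectIdx (l'.map Prod.snd) (Equiv.finsetCongr (finCongr hlen.symm) s)ᶜ)))
            (fun s => (2 * Mm) ^ (χ - 1) *
              (FPI g₁ (j :: selectIdx (l'.map Prod.snd) s)
                * FPI (g - g₁) (k :: selectIdx (l'.map Prod.snd) sᶜ)))
            (fun s => rfl)]
          apply Finset.sum_le_sum
          intro s _
          have hsel1 : selectIdx (l'.map Prod.snd) (Equiv.finsetCongr (finCongr hlen.symm) s)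
              = (selectIdx l' s).map Prod.snd := by
            rw [Equiv.finsetCongr_apply]
            exact selectIdx_map Prod.snd l' s
          have hsel2 : selectIdx (l'.map Prod.snd) (Equiv.finsetCongr (finCongr hlen.symm) s)ᶜ
              = (selectIdx l' sᶜ).map Prod.snd := by
            rw [Equiv.finsetCongr_apply, compl_map_equiv]
            exact selectIdx_map Prod.snd l' sᶜ
          rw [hsel1, hsel2]
          have hcard : (selectIdx l' s).length = s.card := selectIdx_length l' s
          have hcardc : (selectIdx l' sᶜ).length = l'.length - s.card := by
            rw [selectIdx_length, card_compl_fin]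
          have hsle := card_le_fin s
          by_cases hs1 : 2 * g₁ + (s.card + 1) ≤ 2
          · have hz1 : F g₁ ((a,j) :: selectIdx l' s) = 0 :=
              Fsmall_zero hF g₁ _ (by simp) (by simp only [List.length_cons, hcard]; omega)
            have hz2 : FPI g₁ (j :: (selectIdx l' s).map Prod.snd) = 0 :=
              Fsmall_zero hFPI g₁ _ (by simp)
                (by simp only [List.length_cons, List.length_map, hcard]; omega)
            rw [hz1, hz2, zero_mul, zero_mul, mul_zero]
          · by_cases hs2 : 2 * (g - g₁) + (l'.length - s.card + 1) ≤ 2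
            · have hz1 : F (g - g₁) ((a,k) :: selectIdx l' sᶜ) = 0 :=
                Fsmall_zero hF _ _ (by simp) (by simp only [List.length_cons, hcardc]; omega)
              have hz2 : FPI (g - g₁) (k :: (selectIdx l' sᶜ).map Prod.snd) = 0 :=
                Fsmall_zero hFPI _ _ (by simp)
                  (by simp only [List.length_cons, List.length_map, hcardc]; omega)
              rw [hz1, hz2, mul_zero, mul_zero, mul_zero]
            · -- both factors genuine: apply the induction hypothesis twice
              have hIH1 := IH g₁ ((a,j) :: selectIdx l' s) a
                (by simp only [List.length_cons, hcard]; omega) (by simp)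
                (by simp only [List.length_cons, hcard]; omega)
                (by
                  intro y hy
                  rcases List.mem_cons.mp hy with rfl | hy
                  · rfl
                  · exact hl' y (selectIdx_mem l' s hy))
              have hIH2 := IH (g - g₁) ((a,k) :: selectIdx l' sᶜ) a
                (by simp only [List.length_cons, hcardc]; omega) (by simp)
                (by simp only [List.length_cons, hcardc]; omega)
                (by
                  intro y hy
                  rcases List.mem_cons.mp hy with rfl | hy
                  · rfl
                  · exact hl' y (selectIdx_mem l' sᶜ hy))
              set χ₁ : ℕ := 2 * g₁ + ((a,j) :: selectIdx l' s).length - 2 with hχ₁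
              set χ₂ : ℕ := 2 * (g - g₁) + ((a,k) :: selectIdx l' sᶜ).length - 2 with hχ₂
              have hsplit : (2 * Mm) ^ (χ - 1) = (2 * Mm) ^ χ₁ * (2 * Mm) ^ χ₂ := by
                rw [← pow_add]
                congr 1
                simp only [hχ₁, hχ₂, List.length_cons, hcard, hcardc]
                omega
              have heq : (2 * Mm) ^ (χ - 1) *
                  (FPI g₁ (j :: (selectIdx l' s).map Prod.snd)
                    * FPI (g - g₁) (k :: (selectIdx l' sᶜ).map Prod.snd))
                  = ((2 * Mm) ^ χ₁ * FPI g₁ (j :: (selectIdx l' s).map Prod.snd))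
                    * ((2 * Mm) ^ χ₂ * FPI (g - g₁) (k :: (selectIdx l' sᶜ).map Prod.snd)) := by
                rw [hsplit]; ring
              rw [heq]
              have hm1 : (((a,j) :: selectIdx l' s).map Prod.snd)
                  = j :: (selectIdx l' s).map Prod.snd := by simp
              have hm2 : (((a,k) :: selectIdx l' sᶜ).map Prod.snd)
                  = k :: (selectIdx l' sᶜ).map Prod.snd := by simp
              rw [hm1] at hIH1
              rw [hm2] at hIH2
              exact mul_le_mul hIH1 hIH2
                (mul_nonneg (by positivity) (hPnn _ _ (by simp)))
                (hFnn _ _ (by simp))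
      apply add_le_add
      · -- B part
        rw [Finset.mul_sum]
        rw [← Fintype.sum_equiv (finCongr hlen.symm)
          (fun m : Fin l'.length => (2 * Mm) ^ χ *
            ∑' μ : ℕ, (PITensors (ρm/3)).B x.2 ((l'.map Prod.snd).get ((finCongr hlen.symm) m)) μ *
              FPI g (μ :: (l'.map Prod.snd).eraseIdx ((finCongr hlen.symm) m).1))
          (fun m => (2 * Mm) ^ χ *
            ∑' μ : ℕ, (PITensors (ρm/3)).B x.2 ((l'.map Prod.snd).get m) μ *
              FPI g (μ :: (l'.map Prod.snd).eraseIdx m.1))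
          (fun m => rfl)]
        apply Finset.sum_le_sum
        intro m _
        have hget : (l'.map Prod.snd).get ((finCongr hlen.symm) m) = (l'.get m).2 := get_map_cast Prod.snd l' m
        have hcoe : (((finCongr hlen.symm) m : Fin (l'.map Prod.snd).length) : ℕ) = m.1 := rfl
        have herase : (l'.map Prod.snd).eraseIdx ((finCongr hlen.symm) m).1 = (l'.eraseIdx m.1).map Prod.snd := by
          rw [hcoe, eraseIdx_map']
        rw [hget, herase, ← tsum_mul_left]
        have hel : (l'.eraseIdx m.1).length = l'.length - 1 := by
          rw [List.length_eraseIdx]; simp [m.2]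
        have hgetmem : (l'.get m).1 = a := hl' _ (l'.get_mem m)
        apply cmp_tsum a _ _ (3 * g + l'.length + 2)
        · intro μ
          exact mul_nonneg (genB_nonneg θ φ hθneg hθpos hφpos _ _ _) (hFnn _ _ (by simp))
        · intro k
          exact mul_nonneg (by positivity)
            (mul_nonneg (PIB_nonneg hu _ _ _) (hPnn _ _ (by simp)))
        · intro k
          have hIH := IH g ((a,k) :: l'.eraseIdx m.1) a
            (by simp only [List.length_cons, hel]; omega) (by simp)
            (by simp only [List.length_cons, hel]; omega)
            (by
              intro y hy
              rcases List.mem_cons.mp hy with rfl | hy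
              · rfl
              · exact hl' y (mem_eraseIdx' l' m.1 hy))
          have hexp2 : 2 * g + ((a,k) :: l'.eraseIdx m.1).length - 2 = χ - 1 := by
            simp only [List.length_cons, hel]; omega
          rw [hexp2] at hIH
          have hIB := IB θ φ hθneg hθpos hφpos Mm ρm hMm hρm hstrong a x.2 (l'.get m).2 k
          have heq : (2 * Mm) ^ χ *
              ((PITensors (ρm/3)).B x.2 (l'.get m).2 k * FPI g (k :: (l'.eraseIdx m.1).map Prod.snd))
              = (2 * Mm * (PITensors (ρm/3)).B x.2 (l'.get m).2 k)
                * ((2 * Mm) ^ (χ - 1) * FPI g (k :: (l'.eraseIdx m.1).map Prod.snd)) := by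
            rw [hQsplit]; ring
          rw [heq]
          have hBgen : (genTensors θ φ).B (a, x.2) (a, (l'.get m).2) (a, k)
              = (genTensors θ φ).B x (l'.get m) (a, k) := by
            rw [hxe]
            congr 1
            rw [← hgetmem]
          rw [← hBgen]
          have hIH' : (2 * Mm) ^ (χ - 1) * FPI g (k :: (l'.eraseIdx m.1).map Prod.snd)
              ≤ F g ((a,k) :: l'.eraseIdx m.1) := by
            have hm : (((a,k) :: l'.eraseIdx m.1).map Prod.snd)
                = k :: (l'.eraseIdx m.1).map Prod.snd := by simp
            rw [hm] at hIH
            exact hIH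
          exact mul_le_mul hIB hIH'
            (mul_nonneg (by positivity) (hPnn _ _ (by simp)))
            (genB_nonneg θ φ hθneg hθpos hφpos _ _ _)
        · intro μ hμ
          have hz : F g (μ :: l'.eraseIdx m.1) = 0 :=
            Fhead_zero hF g μ _ (by simp only [hel]; omega)
          rw [hz, mul_zero]
      · -- C part
        rw [show (2 * Mm) ^ χ * (1/2 * ∑' μ : ℕ, ∑' ν : ℕ,
            (PITensors (ρm/3)).C x.2 μ ν *
              ((if g = 0 then 0 else FPI (g-1) (μ :: ν :: l'.map Prod.snd))
                + ∑ g₁ ∈ Finset.range (g+1), ∑ s : Finset (Fin (l'.map Prod.snd).length),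
                    FPI g₁ (μ :: selectIdx (l'.map Prod.snd) s)
                      * FPI (g - g₁) (ν :: selectIdx (l'.map Prod.snd) sᶜ)))
          = 1/2 * ((2 * Mm) ^ χ * ∑' μ : ℕ, ∑' ν : ℕ,
            (PITensors (ρm/3)).C x.2 μ ν *
              ((if g = 0 then 0 else FPI (g-1) (μ :: ν :: l'.map Prod.snd))
                + ∑ g₁ ∈ Finset.range (g+1), ∑ s : Finset (Fin (l'.map Prod.snd).length),
                    FPI g₁ (μ :: selectIdx (l'.map Prod.snd) s)
                      * FPI (g - g₁) (ν :: selectIdx (l'.map Prod.snd) sᶜ))) from by ring]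
        apply mul_le_mul_of_nonneg_left ?_ (by norm_num)
        rw [← tsum_mul_left]
        apply cmp_tsum a _ _ (3 * g + l'.length + 2)
        · intro μ
          apply tsum_nonneg
          intro ν
          exact mul_nonneg (genC_nonneg θ φ hθneg hθpos hφpos _ _ _) (Wexpr_nonneg hFnn g l' μ ν)
        · intro j
          apply mul_nonneg (by positivity)
          apply tsum_nonneg
          intro k
          exact mul_nonneg (PIC_nonneg hu _ _ _) (Wexpr_nonneg hPnn g (l'.map Prod.snd) j k)
        · intro j
          rw [← tsum_mul_left]
          apply cmp_tsum a _ _ (3 * g + l'.length + 2)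
          · intro ν
            exact mul_nonneg (genC_nonneg θ φ hθneg hθpos hφpos _ _ _) (Wexpr_nonneg hFnn g l' _ ν)
          · intro k
            exact mul_nonneg (by positivity)
              (mul_nonneg (PIC_nonneg hu _ _ _) (Wexpr_nonneg hPnn g (l'.map Prod.snd) j k))
          · intro k
            have hIC := IC θ φ hθneg hθpos hφpos Mm ρm hMm hρm hstrong a x.2 j k
            have heq : ∀ P W'' : ℝ, (2 * Mm) ^ χ * (P * W'')
                = (2 * Mm * P) * ((2 * Mm) ^ (χ-1) * W'') := by
              intro P W''
              rw [hQsplit]; ring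
            rw [heq]
            have hCgen : (genTensors θ φ).C (a, x.2) (a,j) (a,k)
                = (genTensors θ φ).C x (a,j) (a,k) := by rw [hxe]
            rw [← hCgen]
            exact mul_le_mul hIC (Wcmp j k)
              (mul_nonneg (by positivity) (Wexpr_nonneg hPnn g (l'.map Prod.snd) j k))
              (genC_nonneg θ φ hθneg hθpos hφpos _ _ _)
          · intro ν hν
            rw [Wzero_right hF g l' (a,j) ν (by omega) (by simpa using hν), mul_zero]
        · intro μ hμ
          have : ∀ ν : 𝔞 × ℕ, (genTensors θ φ).C x μ ν *
              ((if g = 0 then 0 else F (g-1) (μ :: ν :: l'))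
                + ∑ g₁ ∈ Finset.range (g+1), ∑ s : Finset (Fin l'.length),
                    F g₁ (μ :: selectIdx l' s) * F (g - g₁) (ν :: selectIdx l' sᶜ)) = 0 := by
            intro ν
            rw [Wzero_left hF g l' μ ν (by omega) (by omega), mul_zero]
          rw [tsum_congr this]
          exact tsum_zero
end Main

/-- lower bound of the amplitudes of a strongly positive regular spectral curve
by the Painlevé I amplitudes at `u₋ = ρ₋/3`, with prefactor `Q₋ = 2 M₋`. -/
theorem stmt_3 {𝔞 : Type*} [Fintype 𝔞] [DecidableEq 𝔞] [Nonempty 𝔞]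
    (θ : 𝔞 → ℤ → ℝ) (φ : 𝔞 × ℕ → 𝔞 × ℕ → ℝ)
    (hθneg : ∀ (a : 𝔞) (m : ℤ), m < 0 → θ a m = 0)
    (hθpos : ∀ (a : 𝔞) (m : ℕ), 0 ≤ θ a (m : ℤ))
    (hφpos : ∀ α β, 0 ≤ φ α β)
    (Mm ρm : ℝ) (hMm : 0 < Mm) (hρm : 0 < ρm)
    (hstrong : ∀ (a : 𝔞) (i : ℕ), Mm / ρm ^ (i + 1) ≤ θ a (i : ℤ))
    (F : ℕ → List (𝔞 × ℕ) → ℝ) (hF : IsAmplitudes Prod.snd (genTensors θ φ) F)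
    (FPI : ℕ → List ℕ → ℝ) (hFPI : IsAmplitudes id (PITensors (ρm / 3)) FPI) :
    ∀ (g n : ℕ), 1 ≤ n → 2 < 2 * g + n → ∀ α : Fin n → 𝔞 × ℕ,
      (if ∀ i j : Fin n, (α i).1 = (α j).1 then (1 : ℝ) else 0) * (2 * Mm) ^ (2 * g + n - 2) *
          FPI g (List.ofFn (fun i => (α i).2))
        ≤ F g (List.ofFn α) := by
  intro g n hn h2 α
  have hlen : (List.ofFn α).length = n := List.length_ofFn
  by_cases hdiag : ∀ i j : Fin n, (α i).1 = (α j).1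
  · rw [if_pos hdiag, one_mul]
    have h0 : 0 < n := hn
    have hmain := main_ineq θ φ hθneg hθpos hφpos Mm ρm hMm hρm hstrong F hF FPI hFPI
      (2 * g + n) g (List.ofFn α) ((α ⟨0, h0⟩).1)
      (by rw [hlen]) (by rw [hlen]; exact hn) (by rw [hlen]; exact h2)
      (by
        intro x hx
        obtain ⟨i, rfl⟩ := List.mem_ofFn.mp hx
        exact hdiag i ⟨0, h0⟩)
    rw [hlen, List.map_ofFn] at hmain
    exact hmain
  · rw [if_neg hdiag, zero_mul, zero_mul]
    have hFnn : ∀ g l, 1 ≤ l.length → 0 ≤ F g l :=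
      amp_nonneg hF (genA_nonneg θ φ hθneg hθpos hφpos) (genB_nonneg θ φ hθneg hθpos hφpos)
        (genC_nonneg θ φ hθneg hθpos hφpos) (genD_nonneg θ φ hθneg hθpos hφpos)
    exact hFnn g (List.ofFn α) (by rw [hlen]; exact hn)
end
end
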